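/- arXiv:1607.00979 — 4 statements merged into one kernel-verified Lean document; each statement's English description precedes it below -/
import Mathlib

section
/- Let γ ∈ ℝ and C > 0 be fixed. Then there exists a constant C' > 0 (depending only on γ and C) such that (ab + 1)^γ · exp(−C(b − a)²) ≤ C' (a + 1)^{2γ} for all a, b ≥ 0. -/
open MeasureTheory

lemma polyexp (g C : ℝ) (hg : 0 ≤ g) (hC : 0 < C) (s : ℝ) (hs : 0 ≤ s) :
    (s + 1) ^ g ≤ Real.exp (C - g - g * Real.log (C / g)) * Real.exp (C * s) := by
  rcases eq_or_lt_of_le hg with h | hg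
  · simp [← h]
    rw [← Real.exp_add]
    exact Real.one_le_exp (by positivity)
  have h1 : (0:ℝ) < s + 1 := by linarith
  rw [Real.rpow_def_of_pos h1, ← Real.exp_add]
  apply Real.exp_le_exp.mpr
  have h2 : Real.log (C / g * (s + 1)) ≤ C / g * (s + 1) - 1 :=
    Real.log_le_sub_one_of_pos (by positivity)
  rw [Real.log_mul (by positivity) (ne_of_gt h1)] at h2
  have h3 : Real.log (s + 1) ≤ C / g * (s + 1) - 1 - Real.log (C / g) := by linarith
  have h4 := mul_le_mul_of_nonneg_left h3 hg.le
  have hCg : g * (C / g * (s + 1)) = C * (s + 1) := by field_simp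
  nlinarith [h4]

lemma sq_rpow (x γ : ℝ) (hx : 0 ≤ x) : (x ^ 2) ^ γ = x ^ (2 * γ) := by
  rw [← Real.rpow_natCast x 2, ← Real.rpow_mul hx]
  norm_num

/-- For fixed `γ ∈ ℝ` and `C > 0`, there exists `C' > 0` such that
`(ab + 1)^γ · exp(−C(b − a)²) ≤ C' (a + 1)^{2γ}` for all `a, b ≥ 0`. -/
theorem stmt0 (γ C : ℝ) (hC : 0 < C) :
    ∃ C' : ℝ, 0 < C' ∧ ∀ a b : ℝ, 0 ≤ a → 0 ≤ b →
      (a * b + 1) ^ γ * Real.exp (-C * (b - a) ^ 2) ≤ C' * (a + 1) ^ (2 * γ) := by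
  set g : ℝ := |γ| with hgdef
  have hg : 0 ≤ g := abs_nonneg γ
  set M : ℝ := Real.exp (C - g - g * Real.log (C / g)) with hM
  refine ⟨(4:ℝ) ^ g * M, by positivity, ?_⟩
  intro a b ha hb
  set s : ℝ := (b - a) ^ 2 with hsdef
  have hs : 0 ≤ s := sq_nonneg _
  have hab : (0:ℝ) < a * b + 1 := by positivity
  have ha1 : (0:ℝ) < a + 1 := by linarith
  have hs1 : (0:ℝ) < s + 1 := by linarith
  -- key: (a*b+1)^γ ≤ 4^g * (s+1)^g * (a+1)^(2γ)
  have key : (a * b + 1) ^ γ ≤ (4:ℝ) ^ g * (s + 1) ^ g * (a + 1) ^ (2 * γ) := by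
    rcases le_or_gt 0 γ with hγ | hγ
    · have hgγ : g = γ := abs_of_nonneg hγ
      have h1 : a * b + 1 ≤ 4 * (s + 1) * (a + 1) ^ 2 := by
        rw [hsdef]; nlinarith [sq_nonneg (b - a), sq_nonneg a, mul_nonneg ha hb,
          mul_nonneg (mul_nonneg ha hb) (sq_nonneg (b - a)), sq_nonneg (a*(b-a))]
      calc (a * b + 1) ^ γ ≤ (4 * (s + 1) * (a + 1) ^ 2) ^ γ :=
              Real.rpow_le_rpow hab.le h1 hγ
        _ = (4:ℝ) ^ γ * (s + 1) ^ γ * ((a + 1) ^ 2) ^ γ := by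
              rw [Real.mul_rpow (by positivity) (by positivity),
                Real.mul_rpow (by norm_num) hs1.le]
        _ = (4:ℝ) ^ g * (s + 1) ^ g * (a + 1) ^ (2 * γ) := by
              rw [hgγ, sq_rpow _ _ ha1.le]
    · have hgγ : g = -γ := abs_of_neg hγ
      have h1 : (a + 1) ^ 2 ≤ 4 * (s + 1) * (a * b + 1) := by
        rw [hsdef]; nlinarith [sq_nonneg (b - a), sq_nonneg (a - b), mul_nonneg ha hb,
          mul_nonneg (mul_nonneg ha hb) (sq_nonneg (b - a)), sq_nonneg (2*b - a)]
      have h2 : (4 * (s + 1) * (a * b + 1)) ^ γ ≤ ((a + 1) ^ 2) ^ γ :=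
        Real.rpow_le_rpow_of_nonpos (by positivity) h1 hγ.le
      rw [Real.mul_rpow (by positivity) hab.le, Real.mul_rpow (by norm_num) hs1.le,
        sq_rpow _ _ ha1.le] at h2
      have h4 : (0:ℝ) < (4:ℝ) ^ γ * (s + 1) ^ γ := by positivity
      -- from h2 : 4^γ * (s+1)^γ * (ab+1)^γ ≤ (a+1)^(2γ)
      have h5 : (a * b + 1) ^ γ ≤ ((4:ℝ) ^ γ * (s + 1) ^ γ)⁻¹ * (a + 1) ^ (2 * γ) := by
        calc (a * b + 1) ^ γ ≤ (a + 1) ^ (2 * γ) / ((4:ℝ) ^ γ * (s + 1) ^ γ) :=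
              (le_div_iff₀' h4).mpr h2
          _ = ((4:ℝ) ^ γ * (s + 1) ^ γ)⁻¹ * (a + 1) ^ (2 * γ) := by ring
      have h6 : ((4:ℝ) ^ γ * (s + 1) ^ γ)⁻¹ = (4:ℝ) ^ g * (s + 1) ^ g := by
        rw [hgγ, mul_inv, ← Real.rpow_neg (by norm_num), ← Real.rpow_neg hs1.le]
      rwa [h6] at h5
  have hexp : (s + 1) ^ g * Real.exp (-C * s) ≤ M := by
    have := polyexp g C hg hC s hs
    have hpos : (0:ℝ) < Real.exp (-C * s) := Real.exp_pos _
    calc (s + 1) ^ g * Real.exp (-C * s) ≤ M * Real.exp (C * s) * Real.exp (-C * s) :=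
          mul_le_mul_of_nonneg_right this hpos.le
      _ = M * Real.exp (C * s + -C * s) := by rw [Real.exp_add]; ring
      _ = M := by simp
  have h2γ : (0:ℝ) ≤ (a + 1) ^ (2 * γ) := Real.rpow_nonneg ha1.le _
  calc (a * b + 1) ^ γ * Real.exp (-C * s)
      ≤ (4:ℝ) ^ g * (s + 1) ^ g * (a + 1) ^ (2 * γ) * Real.exp (-C * s) :=
        mul_le_mul_of_nonneg_right key (Real.exp_pos _).le
    _ = (4:ℝ) ^ g * ((s + 1) ^ g * Real.exp (-C * s)) * (a + 1) ^ (2 * γ) := by ring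
    _ ≤ (4:ℝ) ^ g * M * (a + 1) ^ (2 * γ) := by
        apply mul_le_mul_of_nonneg_right _ h2γ
        apply mul_le_mul_of_nonneg_left hexp (by positivity)
end

section
/- Let κ ≤ 0, γ ∈ ℝ and c > 0 be fixed with κ + γ ≤ 0. Then there exist constants 0 < c₁ ≤ c₂ (depending only on κ, γ, c) such that c₁ z^{2κ}(z² + A)^γ ≤ sup_{t>0} t^κ (t + A)^γ exp(−c z²/t) ≤ c₂ z^{2κ}(z² + A)^γ for all A ≥ 0 and z > 0. -/
open MeasureTheory

/-- Auxiliary: `s ^ a * exp (-(c*s))` is bounded for `s ≥ 1`. -/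
lemma aux_exp_bound (c a : ℝ) (hc : 0 < c) (ha : 0 ≤ a) :
    ∃ M : ℝ, 1 ≤ M ∧ ∀ s : ℝ, 1 ≤ s → s ^ a * Real.exp (-(c * s)) ≤ M := by
  set n : ℕ := ⌈a⌉₊ with hn
  refine ⟨max 1 ((n.factorial : ℝ) * (2 / c) ^ n), le_max_left _ _, fun s hs => ?_⟩
  have hs0 : (0:ℝ) < s := lt_of_lt_of_le one_pos hs
  have h1 : s ^ a ≤ s ^ (n : ℝ) :=
    Real.rpow_le_rpow_of_exponent_le hs (Nat.le_ceil a)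
  have h2 : s ^ (n : ℝ) = s ^ n := Real.rpow_natCast s n
  have h3 : (c * s / 2) ^ n / (n.factorial : ℝ) ≤ Real.exp (c * s / 2) :=
    Real.pow_div_factorial_le_exp _ (by positivity) n
  have h4 : s ^ n ≤ (n.factorial : ℝ) * (2 / c) ^ n * Real.exp (c * s / 2) := by
    have hfac : (0:ℝ) < n.factorial := by positivity
    have : (c * s / 2) ^ n = (c / 2) ^ n * s ^ n := by ring
    calc s ^ n = ((c * s / 2) ^ n / (n.factorial : ℝ)) * ((n.factorial : ℝ) * (2 / c) ^ n) := by
          rw [this]; field_simp; rw [← mul_pow, div_mul_div_comm, mul_comm c 2, div_self (by positivity), one_pow]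
      _ ≤ Real.exp (c * s / 2) * ((n.factorial : ℝ) * (2 / c) ^ n) := by
          apply mul_le_mul_of_nonneg_right h3; positivity
      _ = (n.factorial : ℝ) * (2 / c) ^ n * Real.exp (c * s / 2) := by ring
  calc s ^ a * Real.exp (-(c * s)) ≤ s ^ n * Real.exp (-(c * s)) := by
        apply mul_le_mul_of_nonneg_right (h2 ▸ h1) (Real.exp_nonneg _)
    _ ≤ ((n.factorial : ℝ) * (2 / c) ^ n * Real.exp (c * s / 2)) * Real.exp (-(c * s)) := by
        apply mul_le_mul_of_nonneg_right h4 (Real.exp_nonneg _)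
    _ = (n.factorial : ℝ) * (2 / c) ^ n * Real.exp (c * s / 2 + -(c * s)) := by
        rw [Real.exp_add]; ring
    _ ≤ (n.factorial : ℝ) * (2 / c) ^ n * 1 := by
        apply mul_le_mul_of_nonneg_left (Real.exp_le_one_iff.2 (by nlinarith)) (by positivity)
    _ ≤ max 1 ((n.factorial : ℝ) * (2 / c) ^ n) := by rw [mul_one]; exact le_max_right _ _

/-- Auxiliary: pointwise upper bound for each `t > 0`. -/
lemma aux_elem (κ γ c : ℝ) (hκ : κ ≤ 0) (hc : 0 < c) (hκγ : κ + γ ≤ 0)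
    (M : ℝ) (hM1 : 1 ≤ M)
    (hM : ∀ s : ℝ, 1 ≤ s → s ^ (-κ + |γ|) * Real.exp (-(c * s)) ≤ M)
    (A z t : ℝ) (hA : 0 ≤ A) (hz : 0 < z) (ht : 0 < t) :
    t ^ κ * (t + A) ^ γ * Real.exp (-c * z ^ 2 / t) ≤
      M * (z ^ (2 * κ) * (z ^ 2 + A) ^ γ) := by
  have hz2 : (0:ℝ) < z ^ 2 := by positivity
  have htA : (0:ℝ) < t + A := by linarith
  have hzA : (0:ℝ) < z ^ 2 + A := by linarith
  have hzk : z ^ (2 * κ) = (z ^ 2 : ℝ) ^ κ := by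
    rw [← Real.rpow_natCast z 2, ← Real.rpow_mul hz.le]; norm_num
  have hRHS : (0:ℝ) ≤ z ^ (2 * κ) * (z ^ 2 + A) ^ γ := by positivity
  rcases le_or_gt (z ^ 2) t with h1 | h1
  · -- t ≥ z², exp factor ≤ 1
    have hexp : Real.exp (-c * z ^ 2 / t) ≤ 1 :=
      Real.exp_le_one_iff.2 (div_nonpos_of_nonpos_of_nonneg (by nlinarith) ht.le)
    have hmain : t ^ κ * (t + A) ^ γ ≤ z ^ (2 * κ) * (z ^ 2 + A) ^ γ := by
      rcases le_or_gt 0 γ with hγ | hγ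
      · -- γ ≥ 0
        have hr : (1:ℝ) ≤ t / z ^ 2 := (one_le_div hz2).2 h1
        have key1 : (t + A) ^ γ ≤ (t / z ^ 2) ^ γ * (z ^ 2 + A) ^ γ := by
          rw [← Real.mul_rpow (by positivity) hzA.le]
          apply Real.rpow_le_rpow htA.le _ hγ
          have : t / z ^ 2 * (z ^ 2 + A) = t + t / z ^ 2 * A := by
            field_simp
          rw [this]
          nlinarith
        have key2 : t ^ κ * (t / z ^ 2) ^ γ ≤ z ^ (2 * κ) := by
          have ht' : t = z ^ 2 * (t / z ^ 2) := by field_simp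
          calc t ^ κ * (t / z ^ 2) ^ γ
              = (z ^ 2 : ℝ) ^ κ * (t / z ^ 2) ^ κ * (t / z ^ 2) ^ γ := by
                rw [← Real.mul_rpow hz2.le (by positivity), ← ht']
            _ = (z ^ 2 : ℝ) ^ κ * (t / z ^ 2) ^ (κ + γ) := by
                rw [mul_assoc, ← Real.rpow_add (by positivity)]
            _ ≤ (z ^ 2 : ℝ) ^ κ * 1 := by
                apply mul_le_mul_of_nonneg_left
                  (Real.rpow_le_one_of_one_le_of_nonpos hr hκγ) (by positivity)
            _ = z ^ (2 * κ) := by rw [mul_one, hzk]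
        calc t ^ κ * (t + A) ^ γ ≤ t ^ κ * ((t / z ^ 2) ^ γ * (z ^ 2 + A) ^ γ) := by
              apply mul_le_mul_of_nonneg_left key1 (by positivity)
          _ = (t ^ κ * (t / z ^ 2) ^ γ) * (z ^ 2 + A) ^ γ := by ring
          _ ≤ z ^ (2 * κ) * (z ^ 2 + A) ^ γ :=
              mul_le_mul_of_nonneg_right key2 (by positivity)
      · -- γ < 0
        have k1 : t ^ κ ≤ (z ^ 2 : ℝ) ^ κ := Real.rpow_le_rpow_of_nonpos hz2 h1 hκ
        have k2 : (t + A) ^ γ ≤ (z ^ 2 + A) ^ γ :=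
          Real.rpow_le_rpow_of_nonpos hzA (by linarith) hγ.le
        rw [hzk]
        apply mul_le_mul k1 k2 (by positivity) (by positivity)
    calc t ^ κ * (t + A) ^ γ * Real.exp (-c * z ^ 2 / t)
        ≤ t ^ κ * (t + A) ^ γ * 1 := by
          apply mul_le_mul_of_nonneg_left hexp (by positivity)
      _ = t ^ κ * (t + A) ^ γ := mul_one _
      _ ≤ z ^ (2 * κ) * (z ^ 2 + A) ^ γ := hmain
      _ ≤ M * (z ^ (2 * κ) * (z ^ 2 + A) ^ γ) := le_mul_of_one_le_left hRHS hM1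
  · -- t < z²
    set s : ℝ := z ^ 2 / t with hsdef
    have hs1 : 1 ≤ s := le_of_lt ((one_lt_div ht).2 h1)
    have hs0 : (0:ℝ) < s := lt_of_lt_of_le one_pos hs1
    have hts : t = z ^ 2 / s := by rw [hsdef]; field_simp
    have hexp : Real.exp (-c * z ^ 2 / t) = Real.exp (-(c * s)) := by
      congr 1; rw [hsdef]; field_simp
    have htk : t ^ κ = z ^ (2 * κ) * s ^ (-κ) := by
      rw [hzk, hts, Real.div_rpow hz2.le hs0.le, Real.rpow_neg hs0.le,
        div_eq_mul_inv]
    rcases le_or_gt 0 γ with hγ | hγ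
    · have k2 : (t + A) ^ γ ≤ (z ^ 2 + A) ^ γ :=
        Real.rpow_le_rpow htA.le (by linarith) hγ
      have k3 : s ^ (-κ) ≤ s ^ (-κ + |γ|) :=
        Real.rpow_le_rpow_of_exponent_le hs1 (le_add_of_nonneg_right (abs_nonneg γ))
      calc t ^ κ * (t + A) ^ γ * Real.exp (-c * z ^ 2 / t)
          = z ^ (2 * κ) * (t + A) ^ γ * (s ^ (-κ) * Real.exp (-(c * s))) := by
            rw [htk, hexp]; ring
        _ ≤ z ^ (2 * κ) * (z ^ 2 + A) ^ γ * (s ^ (-κ + |γ|) * Real.exp (-(c * s))) := by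
            apply mul_le_mul
            · exact mul_le_mul_of_nonneg_left k2 (by positivity)
            · exact mul_le_mul_of_nonneg_right k3 (Real.exp_nonneg _)
            · positivity
            · positivity
        _ ≤ z ^ (2 * κ) * (z ^ 2 + A) ^ γ * M := by
            apply mul_le_mul_of_nonneg_left (hM s hs1) (by positivity)
        _ = M * (z ^ (2 * κ) * (z ^ 2 + A) ^ γ) := by ring
    · -- γ < 0 : (t+A)^γ ≤ s^(-γ) (z²+A)^γ
      have hle : z ^ 2 + A ≤ s * (t + A) := by
        have : s * (t + A) = z ^ 2 + s * A := by rw [hts]; field_simp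
        nlinarith
      have k2 : (t + A) ^ γ ≤ s ^ (-γ) * (z ^ 2 + A) ^ γ := by
        have h5 : (s * (t + A)) ^ γ ≤ (z ^ 2 + A) ^ γ :=
          Real.rpow_le_rpow_of_nonpos hzA hle hγ.le
        rw [Real.mul_rpow hs0.le htA.le] at h5
        have hsγ : (0:ℝ) < s ^ γ := Real.rpow_pos_of_pos hs0 γ
        rw [Real.rpow_neg hs0.le]
        calc (t + A) ^ γ = (s ^ γ)⁻¹ * (s ^ γ * (t + A) ^ γ) := by
              field_simp
          _ ≤ (s ^ γ)⁻¹ * (z ^ 2 + A) ^ γ :=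
              mul_le_mul_of_nonneg_left h5 (by positivity)
      have k3 : s ^ (-κ) * s ^ (-γ) = s ^ (-κ + -γ) := (Real.rpow_add hs0 _ _).symm
      have k4 : s ^ (-κ + -γ) ≤ s ^ (-κ + |γ|) :=
        Real.rpow_le_rpow_of_exponent_le hs1 (by
          have := neg_le_abs γ; linarith)
      calc t ^ κ * (t + A) ^ γ * Real.exp (-c * z ^ 2 / t)
          = z ^ (2 * κ) * (t + A) ^ γ * (s ^ (-κ) * Real.exp (-(c * s))) := by
            rw [htk, hexp]; ring
        _ ≤ z ^ (2 * κ) * (s ^ (-γ) * (z ^ 2 + A) ^ γ) * (s ^ (-κ) * Real.exp (-(c * s))) := by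
            apply mul_le_mul_of_nonneg_right _ (by positivity)
            exact mul_le_mul_of_nonneg_left k2 (by positivity)
        _ = z ^ (2 * κ) * (z ^ 2 + A) ^ γ * ((s ^ (-κ) * s ^ (-γ)) * Real.exp (-(c * s))) := by
            ring
        _ = z ^ (2 * κ) * (z ^ 2 + A) ^ γ * (s ^ (-κ + -γ) * Real.exp (-(c * s))) := by
            rw [k3]
        _ ≤ z ^ (2 * κ) * (z ^ 2 + A) ^ γ * (s ^ (-κ + |γ|) * Real.exp (-(c * s))) := by
            apply mul_le_mul_of_nonneg_left _ (by positivity)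
            exact mul_le_mul_of_nonneg_right k4 (Real.exp_nonneg _)
        _ ≤ z ^ (2 * κ) * (z ^ 2 + A) ^ γ * M := by
            apply mul_le_mul_of_nonneg_left (hM s hs1) (by positivity)
        _ = M * (z ^ (2 * κ) * (z ^ 2 + A) ^ γ) := by ring

/-- For fixed `κ ≤ 0`, `γ ∈ ℝ`, `c > 0` with `κ + γ ≤ 0`, there exist
`0 < c₁ ≤ c₂` such that
`c₁ z^{2κ}(z² + A)^γ ≤ sup_{t>0} t^κ (t + A)^γ exp(−c z²/t) ≤ c₂ z^{2κ}(z² + A)^γ`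
for all `A ≥ 0` and `z > 0`. -/
theorem stmt1 (κ γ c : ℝ) (hκ : κ ≤ 0) (hc : 0 < c) (hκγ : κ + γ ≤ 0) :
    ∃ c₁ c₂ : ℝ, 0 < c₁ ∧ c₁ ≤ c₂ ∧ ∀ A z : ℝ, 0 ≤ A → 0 < z →
      c₁ * (z ^ (2 * κ) * (z ^ 2 + A) ^ γ) ≤
        sSup {v : ℝ | ∃ t : ℝ, 0 < t ∧ v = t ^ κ * (t + A) ^ γ * Real.exp (-c * z ^ 2 / t)} ∧
      sSup {v : ℝ | ∃ t : ℝ, 0 < t ∧ v = t ^ κ * (t + A) ^ γ * Real.exp (-c * z ^ 2 / t)} ≤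
        c₂ * (z ^ (2 * κ) * (z ^ 2 + A) ^ γ) := by
  obtain ⟨M, hM1, hM⟩ := aux_exp_bound c (-κ + |γ|) hc (by have := abs_nonneg γ; linarith)
  refine ⟨Real.exp (-c), M, Real.exp_pos _, le_trans (Real.exp_le_one_iff.2 (by linarith)) hM1,
    fun A z hA hz => ?_⟩
  set S := {v : ℝ | ∃ t : ℝ, 0 < t ∧ v = t ^ κ * (t + A) ^ γ * Real.exp (-c * z ^ 2 / t)}
  have hz2 : (0:ℝ) < z ^ 2 := by positivity
  have hzk : z ^ (2 * κ) = (z ^ 2 : ℝ) ^ κ := by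
    rw [← Real.rpow_natCast z 2, ← Real.rpow_mul hz.le]; norm_num
  have hub : ∀ v ∈ S, v ≤ M * (z ^ (2 * κ) * (z ^ 2 + A) ^ γ) := by
    rintro v ⟨t, ht, rfl⟩
    exact aux_elem κ γ c hκ hc hκγ M hM1 hM A z t hA hz ht
  have hbdd : BddAbove S := ⟨_, hub⟩
  have hmem : Real.exp (-c) * (z ^ (2 * κ) * (z ^ 2 + A) ^ γ) ∈ S := by
    refine ⟨z ^ 2, hz2, ?_⟩
    rw [hzk]
    have : -c * z ^ 2 / z ^ 2 = -c := by field_simp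
    rw [this]; ring
  exact ⟨le_csSup hbdd hmem, csSup_le ⟨_, hmem⟩ hub⟩
end

section
/- Let γ > −1 be fixed. Then there exist constants 0 < c₁ ≤ c₂ (depending only on γ) such that for all 0 ≤ a ≤ b ≤ ∞ (with b = ∞ interpreted as an improper integral), c₁ M ≤ ∫_a^b x^γ e^{−x²} dx ≤ c₂ M, where M = [min(b − a, 1/(a+1))] · [min(b, a+1)]^γ · e^{−a²}. -/
open MeasureTheory Set Real

namespace Stmt2Aux

lemma ratio_rpow (γ : ℝ) {u v : ℝ} (hu : 0 < u) (huv : u ≤ v) (hv2 : v ≤ 2 * u) :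
    v ^ γ ≤ 2 ^ |γ| * u ^ γ ∧ u ^ γ ≤ 2 ^ |γ| * v ^ γ := by
  have hv : 0 < v := lt_of_lt_of_le hu huv
  rcases le_or_gt 0 γ with hγ | hγ
  · rw [abs_of_nonneg hγ]
    constructor
    · calc v ^ γ ≤ (2 * u) ^ γ := Real.rpow_le_rpow hv.le hv2 hγ
        _ = 2 ^ γ * u ^ γ := Real.mul_rpow (by norm_num) hu.le
    · calc u ^ γ ≤ v ^ γ := Real.rpow_le_rpow hu.le huv hγ
        _ ≤ 2 ^ γ * v ^ γ := by
            nlinarith [Real.one_le_rpow one_le_two hγ, Real.rpow_nonneg hv.le γ]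
  · rw [abs_of_neg hγ]
    have h2γ : (2:ℝ) ^ (-γ) * 2 ^ γ = 1 := by
      rw [← Real.rpow_add (by norm_num)]; simp
    have h2γpos : (0:ℝ) < 2 ^ γ := Real.rpow_pos_of_pos (by norm_num) γ
    constructor
    · calc v ^ γ ≤ u ^ γ := Real.rpow_le_rpow_of_nonpos hu huv hγ.le
        _ ≤ 2 ^ (-γ) * u ^ γ := by
            nlinarith [Real.one_le_rpow one_le_two (neg_nonneg.2 hγ.le),
              Real.rpow_nonneg hu.le γ]
    · have : u ^ γ ≤ (v / 2) ^ γ := by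
        apply Real.rpow_le_rpow_of_nonpos (by linarith) (by linarith) hγ.le
      calc u ^ γ ≤ (v / 2) ^ γ := this
        _ = v ^ γ / 2 ^ γ := Real.div_rpow hv.le (by norm_num : (0:ℝ) ≤ 2) γ
        _ = 2 ^ (-γ) * v ^ γ := by
            rw [Real.rpow_neg (by norm_num)]
            field_simp


lemma integrableOn_rpow_Ioo {γ : ℝ} (hγ : -1 < γ) (a b : ℝ) :
    IntegrableOn (fun x : ℝ => x ^ γ) (Ioo a b) := by
  have h := (intervalIntegral.intervalIntegrable_rpow' (a := a) (b := b) hγ).1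
  exact h.mono_set Ioo_subset_Ioc_self

lemma lint_Ioo_rpow {γ : ℝ} (hγ : -1 < γ) {a b : ℝ} (ha : 0 ≤ a) :
    ∫⁻ x in Ioo a b, ENNReal.ofReal (x ^ γ) =
      ENNReal.ofReal (∫ x in Ioo a b, x ^ γ) := by
  rw [ofReal_integral_eq_lintegral_ofReal (integrableOn_rpow_Ioo hγ a b)]
  filter_upwards [ae_restrict_mem measurableSet_Ioo] with x hx
  exact Real.rpow_nonneg (le_of_lt (lt_of_le_of_lt ha hx.1)) γ

lemma integral_rpow_Ioo {γ : ℝ} (hγ : -1 < γ) {b : ℝ} (hb : 0 ≤ b) :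
    ∫ x in Ioo 0 b, x ^ γ = b ^ (γ + 1) / (γ + 1) := by
  rw [← MeasureTheory.integral_Ioc_eq_integral_Ioo, ← intervalIntegral.integral_of_le hb,
    integral_rpow (Or.inl hγ), Real.zero_rpow (by linarith), sub_zero]

lemma pow_int_ub {γ : ℝ} (hγ : -1 < γ) :
    ∃ d₂ : ℝ, 0 < d₂ ∧ ∀ a b : ℝ, 0 ≤ a → a ≤ b →
      ∫ x in Ioo a b, x ^ γ ≤ d₂ * ((b - a) * b ^ γ) := by
  have hγ1 : (0:ℝ) < γ + 1 := by linarith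
  refine ⟨max 1 (max ((2:ℝ) ^ (-γ)) (2 / (γ + 1))), by positivity, fun a b ha hab => ?_⟩
  have hb : 0 ≤ b := le_trans ha hab
  have hbγ : 0 ≤ b ^ γ := Real.rpow_nonneg hb γ
  have hMnn : 0 ≤ (b - a) * b ^ γ := mul_nonneg (by linarith) hbγ
  have hmeas : (volume (Ioo a b)).toReal = b - a := by
    rw [Real.volume_Ioo, ENNReal.toReal_ofReal (by linarith)]
  rcases le_or_gt 0 γ with h0 | h0
  · -- x^γ ≤ b^γ pointwise
    have : ∫ x in Ioo a b, x ^ γ ≤ ∫ _x in Ioo a b, b ^ γ := by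
      apply setIntegral_mono_on (integrableOn_rpow_Ioo hγ a b)
        (integrableOn_const (by rw [Real.volume_Ioo]; exact ENNReal.ofReal_ne_top))
        measurableSet_Ioo
      intro x hx
      exact Real.rpow_le_rpow (le_of_lt (lt_of_le_of_lt ha hx.1)) hx.2.le h0
    rw [setIntegral_const, measureReal_def, hmeas, smul_eq_mul] at this
    calc ∫ x in Ioo a b, x ^ γ ≤ (b - a) * b ^ γ := this
      _ ≤ _ := by nlinarith [le_max_left (1:ℝ) (max ((2:ℝ) ^ (-γ)) (2 / (γ + 1)))]
  · rcases le_or_gt b (2 * a) with hba | hba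
    · -- x ≥ a ≥ b/2
      rcases eq_or_lt_of_le hab with rfl | hab'
      · simp [hMnn, mul_nonneg (le_of_lt (by positivity :
          (0:ℝ) < max 1 (max ((2:ℝ) ^ (-γ)) (2 / (γ + 1))))) hMnn]
      have hbpos : 0 < b := lt_of_le_of_lt ha hab'
      have hapos : 0 < a := by linarith
      have : ∫ x in Ioo a b, x ^ γ ≤ ∫ _x in Ioo a b, 2 ^ (-γ) * b ^ γ := by
        apply setIntegral_mono_on (integrableOn_rpow_Ioo hγ a b)
          (integrableOn_const (by rw [Real.volume_Ioo]; exact ENNReal.ofReal_ne_top))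
          measurableSet_Ioo
        intro x hx
        have hxpos : 0 < x := lt_trans hapos hx.1
        calc x ^ γ ≤ (b / 2) ^ γ :=
              Real.rpow_le_rpow_of_nonpos (by linarith) (by linarith [hx.1]) h0.le
          _ = b ^ γ / 2 ^ γ := Real.div_rpow hbpos.le (by norm_num : (0:ℝ) ≤ 2) γ
          _ = 2 ^ (-γ) * b ^ γ := by
              rw [Real.rpow_neg (by norm_num : (0:ℝ) ≤ 2)]; field_simp
      rw [setIntegral_const, measureReal_def, hmeas, smul_eq_mul] at this
      have h2γ : (0:ℝ) < 2 ^ (-γ) := Real.rpow_pos_of_pos (by norm_num) _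
      calc ∫ x in Ioo a b, x ^ γ ≤ (b - a) * (2 ^ (-γ) * b ^ γ) := this
        _ = 2 ^ (-γ) * ((b - a) * b ^ γ) := by ring
        _ ≤ _ := by
            nlinarith [le_trans (le_max_left ((2:ℝ) ^ (-γ)) (2 / (γ + 1)))
              (le_max_right (1:ℝ) (max ((2:ℝ) ^ (-γ)) (2 / (γ + 1))))]
    · -- 2a < b, compare with integral over (0,b)
      have hbpos : 0 < b := by linarith
      have hsub : ∫ x in Ioo a b, x ^ γ ≤ ∫ x in Ioo 0 b, x ^ γ := by
        apply setIntegral_mono_set (integrableOn_rpow_Ioo hγ 0 b)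
        · filter_upwards [ae_restrict_mem measurableSet_Ioo] with x hx
          exact Real.rpow_nonneg hx.1.le γ
        · exact HasSubset.Subset.eventuallyLE (Ioo_subset_Ioo_left ha)
      have hval : ∫ x in Ioo 0 b, x ^ γ = b * b ^ γ / (γ + 1) := by
        rw [integral_rpow_Ioo hγ hbpos.le, Real.rpow_add hbpos, Real.rpow_one]; ring
      have hkey : b * b ^ γ / (γ + 1) ≤ 2 / (γ + 1) * ((b - a) * b ^ γ) := by
        rw [div_le_iff₀ hγ1] at *
        have : b ≤ 2 * (b - a) := by linarith
        calc b * b ^ γ ≤ 2 * (b - a) * b ^ γ := by nlinarith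
          _ = 2 / (γ + 1) * ((b - a) * b ^ γ) * (γ + 1) := by field_simp
      calc ∫ x in Ioo a b, x ^ γ ≤ b * b ^ γ / (γ + 1) := hval ▸ hsub
        _ ≤ 2 / (γ + 1) * ((b - a) * b ^ γ) := hkey
        _ ≤ _ := by
            nlinarith [le_trans (le_max_right ((2:ℝ) ^ (-γ)) (2 / (γ + 1)))
              (le_max_right (1:ℝ) (max ((2:ℝ) ^ (-γ)) (2 / (γ + 1))))]



lemma pow_int_lb {γ : ℝ} (hγ : -1 < γ) :
    ∃ d₁ : ℝ, 0 < d₁ ∧ ∀ a b : ℝ, 0 ≤ a → a ≤ b →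
      d₁ * ((b - a) * b ^ γ) ≤ ∫ x in Ioo a b, x ^ γ := by
  refine ⟨min 1 (1 / (2 * (2:ℝ) ^ γ)), by positivity, fun a b ha hab => ?_⟩
  have hb : 0 ≤ b := le_trans ha hab
  have hbγ : 0 ≤ b ^ γ := Real.rpow_nonneg hb γ
  have hMnn : 0 ≤ (b - a) * b ^ γ := mul_nonneg (by linarith) hbγ
  rcases le_or_gt 0 γ with h0 | h0
  · -- integral over upper half
    have hmid : a ≤ (a + b) / 2 := by linarith
    have hmid2 : (a + b) / 2 ≤ b := by linarith
    have hmeas : (volume (Ioo ((a+b)/2) b)).toReal = (b - a) / 2 := by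
      rw [Real.volume_Ioo, ENNReal.toReal_ofReal (by linarith)]
      ring
    have step1 : ∫ x in Ioo ((a+b)/2) b, ((a+b)/2) ^ γ ≤ ∫ x in Ioo ((a+b)/2) b, x ^ γ := by
      apply setIntegral_mono_on
        (integrableOn_const (by rw [Real.volume_Ioo]; exact ENNReal.ofReal_ne_top))
        (integrableOn_rpow_Ioo hγ _ _) measurableSet_Ioo
      intro x hx
      exact Real.rpow_le_rpow (by linarith) hx.1.le h0
    rw [setIntegral_const, measureReal_def, hmeas, smul_eq_mul] at step1
    have step2 : ∫ x in Ioo ((a+b)/2) b, x ^ γ ≤ ∫ x in Ioo a b, x ^ γ := by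
      apply setIntegral_mono_set (integrableOn_rpow_Ioo hγ a b)
      · filter_upwards [ae_restrict_mem measurableSet_Ioo] with x hx
        exact Real.rpow_nonneg (le_of_lt (lt_of_le_of_lt ha hx.1)) γ
      · exact HasSubset.Subset.eventuallyLE (Ioo_subset_Ioo_left hmid)
    have step3 : (b / 2) ^ γ ≤ ((a+b)/2) ^ γ :=
      Real.rpow_le_rpow (by linarith) (by linarith) h0
    have h2γ : (0:ℝ) < 2 ^ γ := Real.rpow_pos_of_pos (by norm_num) _
    have hhalf : (b / 2) ^ γ = b ^ γ / 2 ^ γ := Real.div_rpow hb (by norm_num : (0:ℝ) ≤ 2) γ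
    have : min 1 (1 / (2 * (2:ℝ) ^ γ)) * ((b - a) * b ^ γ) ≤ (b - a) / 2 * ((a+b)/2) ^ γ := by
      have hm : min 1 (1 / (2 * (2:ℝ) ^ γ)) ≤ 1 / (2 * 2 ^ γ) := min_le_right _ _
      have h1 : (b - a) / 2 * (b / 2) ^ γ ≤ (b - a) / 2 * ((a+b)/2) ^ γ := by
        apply mul_le_mul_of_nonneg_left step3 (by linarith)
      have h2 : min 1 (1 / (2 * (2:ℝ) ^ γ)) * ((b - a) * b ^ γ) ≤ (b - a) / 2 * (b / 2) ^ γ := by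
        rw [hhalf]
        rw [div_eq_mul_inv (b^γ)]
        have : (0:ℝ) ≤ (b - a) * b ^ γ := hMnn
        calc min 1 (1 / (2 * (2:ℝ) ^ γ)) * ((b - a) * b ^ γ)
            ≤ 1 / (2 * 2 ^ γ) * ((b - a) * b ^ γ) := mul_le_mul_of_nonneg_right hm hMnn
          _ = (b - a) / 2 * (b ^ γ * (2 ^ γ)⁻¹) := by field_simp
      linarith
    linarith
  · -- b^γ ≤ x^γ pointwise
    have step1 : ∫ x in Ioo a b, (b:ℝ) ^ γ ≤ ∫ x in Ioo a b, x ^ γ := by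
      apply setIntegral_mono_on
        (integrableOn_const (by rw [Real.volume_Ioo]; exact ENNReal.ofReal_ne_top))
        (integrableOn_rpow_Ioo hγ _ _) measurableSet_Ioo
      intro x hx
      exact Real.rpow_le_rpow_of_nonpos (lt_of_le_of_lt ha hx.1) hx.2.le h0.le
    have hmeas : (volume (Ioo a b)).toReal = b - a := by
      rw [Real.volume_Ioo, ENNReal.toReal_ofReal (by linarith)]
    rw [setIntegral_const, measureReal_def, hmeas, smul_eq_mul] at step1
    have hm : min 1 (1 / (2 * (2:ℝ) ^ γ)) ≤ 1 := min_le_left _ _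
    nlinarith [mul_le_mul_of_nonneg_right hm hMnn]



lemma short {γ : ℝ} (hγ : -1 < γ) :
    ∃ d₁ d₂ : ℝ, 0 < d₁ ∧ 0 < d₂ ∧ ∀ a b : ℝ, 0 ≤ a → a ≤ b → b ≤ a + 1/(a+1) →
      ENNReal.ofReal (d₁ * ((b - a) * b ^ γ * Real.exp (-a ^ 2))) ≤
        ∫⁻ x in Ioo a b, ENNReal.ofReal (x ^ γ * Real.exp (-x ^ 2)) ∧
      ∫⁻ x in Ioo a b, ENNReal.ofReal (x ^ γ * Real.exp (-x ^ 2)) ≤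
        ENNReal.ofReal (d₂ * ((b - a) * b ^ γ * Real.exp (-a ^ 2))) := by
  obtain ⟨p₁, hp₁, hlb⟩ := pow_int_lb hγ
  obtain ⟨p₂, hp₂, hub⟩ := pow_int_ub hγ
  refine ⟨Real.exp (-3) * p₁, p₂, by positivity, hp₂, fun a b ha hab hb => ?_⟩
  have hA : (0:ℝ) < a + 1 := by linarith
  have hPl := hlb a b ha hab
  have hPu := hub a b ha hab
  have hx2 : ∀ x ∈ Ioo a b, x ^ 2 ≤ a ^ 2 + 3 := by
    intro x hx
    have h1 : a * (1/(a+1)) ≤ 1 := by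
      rw [mul_one_div, div_le_one hA]; linarith
    have h2 : 1/(a+1) ≤ 1 := by rw [div_le_one hA]; linarith
    have hx0 : 0 ≤ x := le_trans ha hx.1.le
    nlinarith [hx.2, hx.1]
  constructor
  · calc ENNReal.ofReal (Real.exp (-3) * p₁ * ((b - a) * b ^ γ * Real.exp (-a ^ 2)))
        = ENNReal.ofReal (Real.exp (-3) * Real.exp (-a ^ 2) * (p₁ * ((b - a) * b ^ γ))) := by
          congr 1; ring
      _ ≤ ENNReal.ofReal (Real.exp (-3) * Real.exp (-a ^ 2) * (∫ x in Ioo a b, x ^ γ)) := by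
          apply ENNReal.ofReal_le_ofReal
          exact mul_le_mul_of_nonneg_left hPl (by positivity)
      _ = ENNReal.ofReal (Real.exp (-3) * Real.exp (-a ^ 2)) *
            ENNReal.ofReal (∫ x in Ioo a b, x ^ γ) := by
          rw [ENNReal.ofReal_mul (by positivity)]
      _ = ENNReal.ofReal (Real.exp (-3) * Real.exp (-a ^ 2)) *
            ∫⁻ x in Ioo a b, ENNReal.ofReal (x ^ γ) := by rw [lint_Ioo_rpow hγ ha]
      _ = ∫⁻ x in Ioo a b, ENNReal.ofReal (Real.exp (-3) * Real.exp (-a ^ 2)) *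
            ENNReal.ofReal (x ^ γ) := (lintegral_const_mul' _ _ ENNReal.ofReal_ne_top).symm
      _ ≤ ∫⁻ x in Ioo a b, ENNReal.ofReal (x ^ γ * Real.exp (-x ^ 2)) := by
          apply setLIntegral_mono' measurableSet_Ioo
          intro x hx
          rw [← ENNReal.ofReal_mul (by positivity)]
          apply ENNReal.ofReal_le_ofReal
          have hxγ : 0 ≤ x ^ γ := Real.rpow_nonneg (le_trans ha hx.1.le) γ
          have h3 : Real.exp (-3) * Real.exp (-a ^ 2) = Real.exp (-(a ^ 2 + 3)) := by
            rw [← Real.exp_add]; ring_nf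
          have h4 : Real.exp (-(a ^ 2 + 3)) ≤ Real.exp (-x ^ 2) :=
            Real.exp_le_exp.2 (by nlinarith [hx2 x hx])
          calc Real.exp (-3) * Real.exp (-a ^ 2) * x ^ γ
              ≤ Real.exp (-x ^ 2) * x ^ γ :=
                mul_le_mul_of_nonneg_right (h3 ▸ h4) hxγ
            _ = x ^ γ * Real.exp (-x ^ 2) := mul_comm _ _
  · calc ∫⁻ x in Ioo a b, ENNReal.ofReal (x ^ γ * Real.exp (-x ^ 2))
        ≤ ∫⁻ x in Ioo a b, ENNReal.ofReal (Real.exp (-a ^ 2)) * ENNReal.ofReal (x ^ γ) := by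
          apply setLIntegral_mono' measurableSet_Ioo
          intro x hx
          rw [← ENNReal.ofReal_mul (by positivity)]
          apply ENNReal.ofReal_le_ofReal
          have hxγ : 0 ≤ x ^ γ := Real.rpow_nonneg (le_trans ha hx.1.le) γ
          have hxa : Real.exp (-x ^ 2) ≤ Real.exp (-a ^ 2) := by
            apply Real.exp_le_exp.2
            have hx0 : 0 ≤ x := le_trans ha hx.1.le
            nlinarith [hx.1]
          calc x ^ γ * Real.exp (-x ^ 2) ≤ x ^ γ * Real.exp (-a ^ 2) :=
                mul_le_mul_of_nonneg_left hxa hxγ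
            _ = Real.exp (-a ^ 2) * x ^ γ := mul_comm _ _
      _ = ENNReal.ofReal (Real.exp (-a ^ 2)) * ∫⁻ x in Ioo a b, ENNReal.ofReal (x ^ γ) :=
          lintegral_const_mul' _ _ ENNReal.ofReal_ne_top
      _ = ENNReal.ofReal (Real.exp (-a ^ 2)) * ENNReal.ofReal (∫ x in Ioo a b, x ^ γ) := by
          rw [lint_Ioo_rpow hγ ha]
      _ = ENNReal.ofReal (Real.exp (-a ^ 2) * ∫ x in Ioo a b, x ^ γ) :=
          (ENNReal.ofReal_mul (by positivity)).symm
      _ ≤ ENNReal.ofReal (p₂ * ((b - a) * b ^ γ * Real.exp (-a ^ 2))) := by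
          apply ENNReal.ofReal_le_ofReal
          have := mul_le_mul_of_nonneg_left hPu (Real.exp_nonneg (-a ^ 2))
          calc Real.exp (-a ^ 2) * ∫ x in Ioo a b, x ^ γ
              ≤ Real.exp (-a ^ 2) * (p₂ * ((b - a) * b ^ γ)) := this
            _ = p₂ * ((b - a) * b ^ γ * Real.exp (-a ^ 2)) := by ring



lemma lint_exp {a k : ℝ} (hk : 0 < k) :
    ∫⁻ x in Ioi a, ENNReal.ofReal (Real.exp (-(k * (x - a)))) = ENNReal.ofReal (1/k) := by
  have hfun : (fun x : ℝ => Real.exp (-(k * (x - a)))) =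
      fun x => Real.exp (k * a) * Real.exp (-(k * x)) := by
    funext x; rw [← Real.exp_add]; ring_nf
  have hint : IntegrableOn (fun x : ℝ => Real.exp (-(k * (x - a)))) (Ioi a) := by
    rw [hfun]
    have := (exp_neg_integrableOn_Ioi a hk).const_mul (Real.exp (k * a))
    simpa [neg_mul, IntegrableOn] using this
  rw [← ofReal_integral_eq_lintegral_ofReal hint
    (Filter.Eventually.of_forall fun x => Real.exp_nonneg _)]
  congr 1
  rw [hfun, MeasureTheory.integral_const_mul]
  have h1 : ∫ x in Ioi a, Real.exp (-(k * x)) = k⁻¹ * Real.exp (-(k * a)) := by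
    have h := integral_comp_mul_left_Ioi (fun x => Real.exp (-x)) a hk
    simp only [smul_eq_mul] at h
    rw [h, integral_exp_neg_Ioi]
  rw [h1, show Real.exp (k*a) * (k⁻¹ * Real.exp (-(k*a))) =
    (Real.exp (k*a) * Real.exp (-(k*a))) * k⁻¹ by ring, ← Real.exp_add]
  simp [one_div]

lemma tail_pointwise_nonneg {γ a x : ℝ} (hγ0 : 0 ≤ γ) (ha : 0 ≤ a) (hx : a < x) :
    x ^ γ * Real.exp (-x ^ 2) ≤
      Real.exp ((γ + 1/2) ^ 2 / 4) * (a+1) ^ γ * Real.exp (-a ^ 2) *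
        Real.exp (-((a+1)/2 * (x - a))) := by
  have hx0 : 0 ≤ x := le_trans ha hx.le
  have ht : 0 ≤ x - a := by linarith
  have h1 : x ^ γ ≤ (a+1) ^ γ * (1 + (x - a)) ^ γ := by
    rw [← Real.mul_rpow (by linarith) (by linarith)]
    apply Real.rpow_le_rpow hx0 (by nlinarith [mul_nonneg ha ht]) hγ0
  have h2 : (1 + (x - a)) ^ γ ≤ Real.exp ((x - a) * γ) := by
    calc (1 + (x - a)) ^ γ ≤ Real.exp (x - a) ^ γ := by
          apply Real.rpow_le_rpow (by linarith) _ hγ0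
          linarith [Real.add_one_le_exp (x - a)]
      _ = Real.exp ((x - a) * γ) := by
          rw [Real.rpow_def_of_pos (Real.exp_pos _), Real.log_exp]
  have h3 : Real.exp ((x - a) * γ) * Real.exp (-x ^ 2) ≤
      Real.exp ((γ + 1/2) ^ 2 / 4) * Real.exp (-a ^ 2) *
        Real.exp (-((a+1)/2 * (x - a))) := by
    rw [← Real.exp_add, ← Real.exp_add, ← Real.exp_add]
    apply Real.exp_le_exp.2
    nlinarith [sq_nonneg (γ + 1/2 - 2*(x - a)), mul_nonneg ha ht]
  have hγnn : 0 ≤ (a+1) ^ γ := Real.rpow_nonneg (by linarith) γ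
  calc x ^ γ * Real.exp (-x ^ 2)
      ≤ ((a+1) ^ γ * (1 + (x - a)) ^ γ) * Real.exp (-x ^ 2) :=
        mul_le_mul_of_nonneg_right h1 (Real.exp_nonneg _)
    _ ≤ ((a+1) ^ γ * Real.exp ((x - a) * γ)) * Real.exp (-x ^ 2) := by
        apply mul_le_mul_of_nonneg_right _ (Real.exp_nonneg _)
        exact mul_le_mul_of_nonneg_left h2 hγnn
    _ = (a+1) ^ γ * (Real.exp ((x - a) * γ) * Real.exp (-x ^ 2)) := by ring
    _ ≤ (a+1) ^ γ * (Real.exp ((γ + 1/2) ^ 2 / 4) * Real.exp (-a ^ 2) *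
          Real.exp (-((a+1)/2 * (x - a)))) := mul_le_mul_of_nonneg_left h3 hγnn
    _ = _ := by ring

lemma tail_pointwise_neg {γ a x : ℝ} (hγ0 : γ < 0) (ha : 0 ≤ a) (hx : a + 1/(a+1) ≤ x) :
    x ^ γ * Real.exp (-x ^ 2) ≤
      (2:ℝ) ^ (-γ) * (a+1) ^ γ * Real.exp (1/4) * Real.exp (-a ^ 2) *
        Real.exp (-((a+1)/2 * (x - a))) := by
  have hA : (0:ℝ) < a + 1 := by linarith
  have hδ : 0 < 1/(a+1) := by positivity
  have hhalf : (a+1)/2 ≤ a + 1/(a+1) := by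
    have h : (a + 1/(a+1) - (a+1)/2) * (a+1) = (a^2+1)/2 := by field_simp; ring
    nlinarith [sq_nonneg a]
  have hxhalf : (a+1)/2 ≤ x := le_trans hhalf hx
  have hx0 : 0 < x := lt_of_lt_of_le (by positivity) hxhalf
  have ht : 0 ≤ x - a := by nlinarith
  have h1 : x ^ γ ≤ (2:ℝ) ^ (-γ) * (a+1) ^ γ := by
    calc x ^ γ ≤ ((a+1)/2) ^ γ :=
          Real.rpow_le_rpow_of_nonpos (by positivity) hxhalf hγ0.le
      _ = (a+1) ^ γ / 2 ^ γ := Real.div_rpow hA.le (by norm_num : (0:ℝ) ≤ 2) γ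
      _ = (2:ℝ) ^ (-γ) * (a+1) ^ γ := by
          rw [Real.rpow_neg (by norm_num : (0:ℝ) ≤ 2)]; field_simp
  have h2 : Real.exp (-x ^ 2) ≤
      Real.exp (1/4) * Real.exp (-a ^ 2) * Real.exp (-((a+1)/2 * (x - a))) := by
    rw [← Real.exp_add, ← Real.exp_add]
    apply Real.exp_le_exp.2
    nlinarith [sq_nonneg ((x - a) - 1/2), mul_nonneg ha ht]
  have hc : 0 ≤ (2:ℝ) ^ (-γ) * (a+1) ^ γ :=
    mul_nonneg (Real.rpow_nonneg (by norm_num) _) (Real.rpow_nonneg hA.le _)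
  calc x ^ γ * Real.exp (-x ^ 2)
      ≤ ((2:ℝ) ^ (-γ) * (a+1) ^ γ) * Real.exp (-x ^ 2) :=
        mul_le_mul_of_nonneg_right h1 (Real.exp_nonneg _)
    _ ≤ ((2:ℝ) ^ (-γ) * (a+1) ^ γ) *
          (Real.exp (1/4) * Real.exp (-a ^ 2) * Real.exp (-((a+1)/2 * (x - a)))) :=
        mul_le_mul_of_nonneg_left h2 hc
    _ = _ := by ring



lemma half_le {a : ℝ} (ha : 0 ≤ a) : (a+1)/2 ≤ a + 1/(a+1) := by
  have hA : (0:ℝ) < a + 1 := by linarith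
  have h : (a + 1/(a+1) - (a+1)/2) * (a+1) = (a^2+1)/2 := by field_simp; ring
  nlinarith [sq_nonneg a]

lemma rpow_half_le {γ a u : ℝ} (hγ0 : γ < 0) (ha : 0 ≤ a) (hu : (a+1)/2 ≤ u) :
    u ^ γ ≤ 2 ^ (-γ) * (a+1) ^ γ := by
  have hA : (0:ℝ) < a + 1 := by linarith
  calc u ^ γ ≤ ((a+1)/2) ^ γ :=
        Real.rpow_le_rpow_of_nonpos (by positivity) hu hγ0.le
    _ = (a+1) ^ γ / 2 ^ γ := Real.div_rpow hA.le (by norm_num : (0:ℝ) ≤ 2) γ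
    _ = (2:ℝ) ^ (-γ) * (a+1) ^ γ := by
        rw [Real.rpow_neg (by norm_num : (0:ℝ) ≤ 2)]; field_simp

lemma tail {γ : ℝ} (hγ : -1 < γ) :
    ∃ C : ℝ, 0 < C ∧ ∀ a : ℝ, 0 ≤ a →
      ∫⁻ x in Ioi a, ENNReal.ofReal (x ^ γ * Real.exp (-x ^ 2)) ≤
        ENNReal.ofReal (C * (1/(a+1) * (a+1) ^ γ * Real.exp (-a ^ 2))) := by
  obtain ⟨d₁, d₂, hd₁, hd₂, hshort⟩ := short hγ
  rcases le_or_gt 0 γ with h0 | h0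
  · refine ⟨2 * Real.exp ((γ + 1/2) ^ 2 / 4), by positivity, fun a ha => ?_⟩
    have hA : (0:ℝ) < a + 1 := by linarith
    have hk : (0:ℝ) < (a+1)/2 := by positivity
    have hKnn : (0:ℝ) ≤ Real.exp ((γ + 1/2) ^ 2 / 4) * (a+1) ^ γ * Real.exp (-a ^ 2) := by
      positivity
    calc ∫⁻ x in Ioi a, ENNReal.ofReal (x ^ γ * Real.exp (-x ^ 2))
        ≤ ∫⁻ x in Ioi a,
            ENNReal.ofReal (Real.exp ((γ + 1/2) ^ 2 / 4) * (a+1) ^ γ * Real.exp (-a ^ 2)) *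
              ENNReal.ofReal (Real.exp (-((a+1)/2 * (x - a)))) := by
          apply setLIntegral_mono' measurableSet_Ioi
          intro x hx
          rw [← ENNReal.ofReal_mul hKnn]
          exact ENNReal.ofReal_le_ofReal (tail_pointwise_nonneg h0 ha hx)
      _ = ENNReal.ofReal (Real.exp ((γ + 1/2) ^ 2 / 4) * (a+1) ^ γ * Real.exp (-a ^ 2)) *
            ∫⁻ x in Ioi a, ENNReal.ofReal (Real.exp (-((a+1)/2 * (x - a)))) :=
          lintegral_const_mul' _ _ ENNReal.ofReal_ne_top
      _ = ENNReal.ofReal (Real.exp ((γ + 1/2) ^ 2 / 4) * (a+1) ^ γ * Real.exp (-a ^ 2)) *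
            ENNReal.ofReal (1/((a+1)/2)) := by rw [lint_exp hk]
      _ = ENNReal.ofReal (Real.exp ((γ + 1/2) ^ 2 / 4) * (a+1) ^ γ * Real.exp (-a ^ 2) *
            (1/((a+1)/2))) := (ENNReal.ofReal_mul hKnn).symm
      _ = ENNReal.ofReal (2 * Real.exp ((γ + 1/2) ^ 2 / 4) *
            (1/(a+1) * (a+1) ^ γ * Real.exp (-a ^ 2))) := by
          congr 1; field_simp
  · refine ⟨d₂ * 2 ^ (-γ) + 2 * (2 ^ (-γ) * Real.exp (1/4)), by positivity, fun a ha => ?_⟩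
    have hA : (0:ℝ) < a + 1 := by linarith
    have hδ : (0:ℝ) < 1/(a+1) := by positivity
    have hab : a < a + 1/(a+1) := by linarith
    have hsplit : Ioi a = Ioo a (a + 1/(a+1)) ∪ Ici (a + 1/(a+1)) :=
      (Set.Ioo_union_Ici_eq_Ioi hab).symm
    have hbγ : (a + 1/(a+1)) ^ γ ≤ 2 ^ (-γ) * (a+1) ^ γ :=
      rpow_half_le h0 ha (half_le ha)
    have piece1 : ∫⁻ x in Ioo a (a + 1/(a+1)), ENNReal.ofReal (x ^ γ * Real.exp (-x ^ 2)) ≤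
        ENNReal.ofReal (d₂ * 2 ^ (-γ) * (1/(a+1) * (a+1) ^ γ * Real.exp (-a ^ 2))) := by
      refine le_trans (hshort a (a + 1/(a+1)) ha hab.le le_rfl).2 ?_
      apply ENNReal.ofReal_le_ofReal
      calc d₂ * ((a + 1/(a+1) - a) * (a + 1/(a+1)) ^ γ * Real.exp (-a ^ 2))
          = d₂ * (1/(a+1)) * Real.exp (-a ^ 2) * (a + 1/(a+1)) ^ γ := by ring
        _ ≤ d₂ * (1/(a+1)) * Real.exp (-a ^ 2) * (2 ^ (-γ) * (a+1) ^ γ) :=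
            mul_le_mul_of_nonneg_left hbγ (by positivity)
        _ = d₂ * 2 ^ (-γ) * (1/(a+1) * (a+1) ^ γ * Real.exp (-a ^ 2)) := by ring
    have hC2nn : (0:ℝ) ≤ 2 ^ (-γ) * (a+1) ^ γ * Real.exp (1/4) * Real.exp (-a ^ 2) := by
      positivity
    have piece2 : ∫⁻ x in Ici (a + 1/(a+1)), ENNReal.ofReal (x ^ γ * Real.exp (-x ^ 2)) ≤
        ENNReal.ofReal (2 * (2 ^ (-γ) * Real.exp (1/4)) *
          (1/(a+1) * (a+1) ^ γ * Real.exp (-a ^ 2))) := by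
      calc ∫⁻ x in Ici (a + 1/(a+1)), ENNReal.ofReal (x ^ γ * Real.exp (-x ^ 2))
          ≤ ∫⁻ x in Ici (a + 1/(a+1)),
              ENNReal.ofReal (2 ^ (-γ) * (a+1) ^ γ * Real.exp (1/4) * Real.exp (-a ^ 2)) *
                ENNReal.ofReal (Real.exp (-((a+1)/2 * (x - a)))) := by
            apply setLIntegral_mono' measurableSet_Ici
            intro x hx
            rw [← ENNReal.ofReal_mul hC2nn]
            exact ENNReal.ofReal_le_ofReal (tail_pointwise_neg h0 ha hx)
        _ ≤ ∫⁻ x in Ioi a,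
              ENNReal.ofReal (2 ^ (-γ) * (a+1) ^ γ * Real.exp (1/4) * Real.exp (-a ^ 2)) *
                ENNReal.ofReal (Real.exp (-((a+1)/2 * (x - a)))) :=
            lintegral_mono_set (fun x hx => lt_of_lt_of_le hab hx)
        _ = ENNReal.ofReal (2 ^ (-γ) * (a+1) ^ γ * Real.exp (1/4) * Real.exp (-a ^ 2)) *
              ∫⁻ x in Ioi a, ENNReal.ofReal (Real.exp (-((a+1)/2 * (x - a)))) :=
            lintegral_const_mul' _ _ ENNReal.ofReal_ne_top
        _ = ENNReal.ofReal (2 ^ (-γ) * (a+1) ^ γ * Real.exp (1/4) * Real.exp (-a ^ 2)) *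
              ENNReal.ofReal (1/((a+1)/2)) := by rw [lint_exp (by positivity : (0:ℝ) < (a+1)/2)]
        _ = ENNReal.ofReal (2 ^ (-γ) * (a+1) ^ γ * Real.exp (1/4) * Real.exp (-a ^ 2) *
              (1/((a+1)/2))) := (ENNReal.ofReal_mul hC2nn).symm
        _ = ENNReal.ofReal (2 * (2 ^ (-γ) * Real.exp (1/4)) *
              (1/(a+1) * (a+1) ^ γ * Real.exp (-a ^ 2))) := by
            congr 1; field_simp
    calc ∫⁻ x in Ioi a, ENNReal.ofReal (x ^ γ * Real.exp (-x ^ 2))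
        = ∫⁻ x in Ioo a (a + 1/(a+1)) ∪ Ici (a + 1/(a+1)),
            ENNReal.ofReal (x ^ γ * Real.exp (-x ^ 2)) := by rw [← hsplit]
      _ ≤ (∫⁻ x in Ioo a (a + 1/(a+1)), ENNReal.ofReal (x ^ γ * Real.exp (-x ^ 2))) +
            ∫⁻ x in Ici (a + 1/(a+1)), ENNReal.ofReal (x ^ γ * Real.exp (-x ^ 2)) :=
          lintegral_union_le _ _ _
      _ ≤ ENNReal.ofReal (d₂ * 2 ^ (-γ) * (1/(a+1) * (a+1) ^ γ * Real.exp (-a ^ 2))) +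
            ENNReal.ofReal (2 * (2 ^ (-γ) * Real.exp (1/4)) *
              (1/(a+1) * (a+1) ^ γ * Real.exp (-a ^ 2))) := add_le_add piece1 piece2
      _ = ENNReal.ofReal ((d₂ * 2 ^ (-γ) + 2 * (2 ^ (-γ) * Real.exp (1/4))) *
            (1/(a+1) * (a+1) ^ γ * Real.exp (-a ^ 2))) := by
          rw [← ENNReal.ofReal_add (by positivity) (by positivity)]
          congr 1; ring



end Stmt2Aux



set_option maxHeartbeats 1000000 in
/-- For fixed `γ > −1` there exist `0 < c₁ ≤ c₂` such that for all
`0 ≤ a ≤ b ≤ ∞`,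
`c₁ M ≤ ∫_a^b x^γ e^{−x²} dx ≤ c₂ M`, where
`M = min(b − a, 1/(a+1)) · (min(b, a+1))^γ · e^{−a²}`
(for `b = ∞`, `M = (1/(a+1)) (a+1)^γ e^{−a²}`). -/
theorem stmt2 (γ : ℝ) (hγ : -1 < γ) :
    ∃ c₁ c₂ : ℝ, 0 < c₁ ∧ c₁ ≤ c₂ ∧
      (∀ a b : ℝ, 0 ≤ a → a ≤ b →
        ENNReal.ofReal
            (c₁ * (min (b - a) (1 / (a + 1)) * (min b (a + 1)) ^ γ * Real.exp (-a ^ 2))) ≤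
          ∫⁻ x in Set.Ioo a b, ENNReal.ofReal (x ^ γ * Real.exp (-x ^ 2)) ∧
        ∫⁻ x in Set.Ioo a b, ENNReal.ofReal (x ^ γ * Real.exp (-x ^ 2)) ≤
          ENNReal.ofReal
            (c₂ * (min (b - a) (1 / (a + 1)) * (min b (a + 1)) ^ γ * Real.exp (-a ^ 2)))) ∧
      (∀ a : ℝ, 0 ≤ a →
        ENNReal.ofReal (c₁ * (1 / (a + 1) * (a + 1) ^ γ * Real.exp (-a ^ 2))) ≤
          ∫⁻ x in Set.Ioi a, ENNReal.ofReal (x ^ γ * Real.exp (-x ^ 2)) ∧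
        ∫⁻ x in Set.Ioi a, ENNReal.ofReal (x ^ γ * Real.exp (-x ^ 2)) ≤
          ENNReal.ofReal (c₂ * (1 / (a + 1) * (a + 1) ^ γ * Real.exp (-a ^ 2)))) := by
  obtain ⟨d₁, d₂, hd₁, hd₂, hshort⟩ := Stmt2Aux.short hγ
  obtain ⟨C, hC, htail⟩ := Stmt2Aux.tail hγ
  set K : ℝ := 2 ^ |γ| with hK
  have hKpos : (0:ℝ) < K := Real.rpow_pos_of_pos two_pos _
  have hK1 : (1:ℝ) ≤ K := Real.one_le_rpow one_le_two (abs_nonneg γ)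
  have hKK : (0:ℝ) < K * K := by positivity
  have hc₁pos : (0:ℝ) < d₁ / (K * K) := by positivity
  refine ⟨d₁ / (K * K), d₁ / (K * K) + d₂ + C * (K * K), hc₁pos,
    by nlinarith, ?_, ?_⟩
  · -- Ioo part
    intro a b ha hab
    have hA : (0:ℝ) < a + 1 := by linarith
    have hδpos : (0:ℝ) < 1 / (a + 1) := by positivity
    have hδ1 : 1 / (a + 1) ≤ 1 := by rw [div_le_one hA]; linarith
    have hb0 : (0:ℝ) ≤ b := le_trans ha hab
    have hc₁d₁ : d₁ / (K * K) ≤ d₁ := by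
      rw [div_le_iff₀ hKK]
      nlinarith [mul_le_mul hK1 hK1 zero_le_one hKpos.le]
    rcases le_or_gt b (a + 1 / (a + 1)) with hcase | hcase
    · -- short interval case
      have hmin1 : min (b - a) (1 / (a + 1)) = b - a := min_eq_left (by linarith)
      have hmin2 : min b (a + 1) = b := min_eq_left (by linarith)
      rw [hmin1, hmin2]
      obtain ⟨hlo, hhi⟩ := hshort a b ha hab hcase
      have hM0 : (0:ℝ) ≤ (b - a) * b ^ γ * Real.exp (-a ^ 2) :=
        mul_nonneg (mul_nonneg (by linarith) (Real.rpow_nonneg hb0 γ)) (Real.exp_nonneg _)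
      constructor
      · exact le_trans (ENNReal.ofReal_le_ofReal
          (mul_le_mul_of_nonneg_right hc₁d₁ hM0)) hlo
      · refine le_trans hhi (ENNReal.ofReal_le_ofReal
          (mul_le_mul_of_nonneg_right ?_ hM0))
        nlinarith
    · -- long interval case
      have hmin1 : min (b - a) (1 / (a + 1)) = 1 / (a + 1) := min_eq_right (by linarith)
      rw [hmin1]
      have hhalfb : (a + 1) / 2 ≤ a + 1 / (a + 1) := Stmt2Aux.half_le ha
      have hupos : (0:ℝ) < (a + 1) / 2 := by positivity
      have hm_lb : (a + 1) / 2 ≤ min b (a + 1) := le_min (by linarith) (by linarith)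
      have hm_ub : min b (a + 1) ≤ a + 1 := min_le_right _ _
      have hm0 : (0:ℝ) ≤ min b (a + 1) := le_trans hupos.le hm_lb
      have hr1 := Stmt2Aux.ratio_rpow γ hupos hm_lb (by linarith)
      have hr2 := Stmt2Aux.ratio_rpow γ hupos (by linarith : (a+1)/2 ≤ a + 1/(a+1))
        (by linarith)
      have hr3 := Stmt2Aux.ratio_rpow γ hupos (by linarith : (a+1)/2 ≤ a + 1)
        (by linarith)
      have hml : (min b (a + 1)) ^ γ ≤ K * (K * (a + 1/(a+1)) ^ γ) :=
        hr1.1.trans (mul_le_mul_of_nonneg_left hr2.2 hKpos.le)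
      have hmu : (a + 1) ^ γ ≤ K * (K * (min b (a + 1)) ^ γ) :=
        hr3.1.trans (mul_le_mul_of_nonneg_left hr1.2 hKpos.le)
      constructor
      · calc ENNReal.ofReal (d₁ / (K * K) *
              (1 / (a + 1) * (min b (a + 1)) ^ γ * Real.exp (-a ^ 2)))
            ≤ ENNReal.ofReal (d₁ * ((a + 1/(a+1) - a) * (a + 1/(a+1)) ^ γ *
                Real.exp (-a ^ 2))) := by
              apply ENNReal.ofReal_le_ofReal
              calc d₁ / (K * K) * (1 / (a + 1) * (min b (a + 1)) ^ γ * Real.exp (-a ^ 2))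
                  = d₁ / (K * K) * (1 / (a + 1) * Real.exp (-a ^ 2)) *
                      (min b (a + 1)) ^ γ := by ring
                _ ≤ d₁ / (K * K) * (1 / (a + 1) * Real.exp (-a ^ 2)) *
                      (K * (K * (a + 1/(a+1)) ^ γ)) :=
                    mul_le_mul_of_nonneg_left hml (by positivity)
                _ = d₁ * ((a + 1/(a+1) - a) * (a + 1/(a+1)) ^ γ * Real.exp (-a ^ 2)) := by
                    rw [show a + 1/(a+1) - a = 1/(a+1) from by ring]
                    field_simp
          _ ≤ ∫⁻ x in Set.Ioo a (a + 1/(a+1)), ENNReal.ofReal (x ^ γ * Real.exp (-x ^ 2)) :=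
              (hshort a (a + 1/(a+1)) ha (by linarith) le_rfl).1
          _ ≤ ∫⁻ x in Set.Ioo a b, ENNReal.ofReal (x ^ γ * Real.exp (-x ^ 2)) :=
              lintegral_mono_set (Set.Ioo_subset_Ioo_right hcase.le)
      · calc ∫⁻ x in Set.Ioo a b, ENNReal.ofReal (x ^ γ * Real.exp (-x ^ 2))
            ≤ ∫⁻ x in Set.Ioi a, ENNReal.ofReal (x ^ γ * Real.exp (-x ^ 2)) :=
              lintegral_mono_set Set.Ioo_subset_Ioi_self
          _ ≤ ENNReal.ofReal (C * (1 / (a + 1) * (a + 1) ^ γ * Real.exp (-a ^ 2))) :=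
              htail a ha
          _ ≤ ENNReal.ofReal ((d₁ / (K * K) + d₂ + C * (K * K)) *
                (1 / (a + 1) * (min b (a + 1)) ^ γ * Real.exp (-a ^ 2))) := by
              apply ENNReal.ofReal_le_ofReal
              have hMm : (0:ℝ) ≤ 1 / (a + 1) * (min b (a + 1)) ^ γ * Real.exp (-a ^ 2) :=
                mul_nonneg (mul_nonneg hδpos.le (Real.rpow_nonneg hm0 γ)) (Real.exp_nonneg _)
              calc C * (1 / (a + 1) * (a + 1) ^ γ * Real.exp (-a ^ 2))
                  = C * (1 / (a + 1) * Real.exp (-a ^ 2)) * (a + 1) ^ γ := by ring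
                _ ≤ C * (1 / (a + 1) * Real.exp (-a ^ 2)) *
                      (K * (K * (min b (a + 1)) ^ γ)) :=
                    mul_le_mul_of_nonneg_left hmu (by positivity)
                _ = C * (K * K) *
                      (1 / (a + 1) * (min b (a + 1)) ^ γ * Real.exp (-a ^ 2)) := by ring
                _ ≤ (d₁ / (K * K) + d₂ + C * (K * K)) *
                      (1 / (a + 1) * (min b (a + 1)) ^ γ * Real.exp (-a ^ 2)) :=
                    mul_le_mul_of_nonneg_right
                      (by nlinarith [mul_le_mul hK1 hK1 zero_le_one hKpos.le, hc₁pos, hd₂, hC]) hMm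
  · -- Ioi part
    intro a ha
    have hA : (0:ℝ) < a + 1 := by linarith
    have hδpos : (0:ℝ) < 1 / (a + 1) := by positivity
    have hδ1 : 1 / (a + 1) ≤ 1 := by rw [div_le_one hA]; linarith
    have hhalfb : (a + 1) / 2 ≤ a + 1 / (a + 1) := Stmt2Aux.half_le ha
    have hupos : (0:ℝ) < (a + 1) / 2 := by positivity
    have hr2 := Stmt2Aux.ratio_rpow γ hupos (by linarith : (a+1)/2 ≤ a + 1/(a+1))
      (by linarith)
    have hr3 := Stmt2Aux.ratio_rpow γ hupos (by linarith : (a+1)/2 ≤ a + 1)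
      (by linarith)
    have h1u : (a + 1) ^ γ ≤ K * (K * (a + 1/(a+1)) ^ γ) :=
      hr3.1.trans (mul_le_mul_of_nonneg_left hr2.2 hKpos.le)
    constructor
    · calc ENNReal.ofReal (d₁ / (K * K) *
            (1 / (a + 1) * (a + 1) ^ γ * Real.exp (-a ^ 2)))
          ≤ ENNReal.ofReal (d₁ * ((a + 1/(a+1) - a) * (a + 1/(a+1)) ^ γ *
              Real.exp (-a ^ 2))) := by
            apply ENNReal.ofReal_le_ofReal
            calc d₁ / (K * K) * (1 / (a + 1) * (a + 1) ^ γ * Real.exp (-a ^ 2))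
                = d₁ / (K * K) * (1 / (a + 1) * Real.exp (-a ^ 2)) * (a + 1) ^ γ := by ring
              _ ≤ d₁ / (K * K) * (1 / (a + 1) * Real.exp (-a ^ 2)) *
                    (K * (K * (a + 1/(a+1)) ^ γ)) :=
                  mul_le_mul_of_nonneg_left h1u (by positivity)
              _ = d₁ * ((a + 1/(a+1) - a) * (a + 1/(a+1)) ^ γ * Real.exp (-a ^ 2)) := by
                  rw [show a + 1/(a+1) - a = 1/(a+1) from by ring]
                  field_simp
        _ ≤ ∫⁻ x in Set.Ioo a (a + 1/(a+1)), ENNReal.ofReal (x ^ γ * Real.exp (-x ^ 2)) :=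
            (hshort a (a + 1/(a+1)) ha (by linarith) le_rfl).1
        _ ≤ ∫⁻ x in Set.Ioi a, ENNReal.ofReal (x ^ γ * Real.exp (-x ^ 2)) :=
            lintegral_mono_set Set.Ioo_subset_Ioi_self
    · refine le_trans (htail a ha) (ENNReal.ofReal_le_ofReal ?_)
      have hMm : (0:ℝ) ≤ 1 / (a + 1) * (a + 1) ^ γ * Real.exp (-a ^ 2) :=
        mul_nonneg (mul_nonneg hδpos.le (Real.rpow_nonneg hA.le γ)) (Real.exp_nonneg _)
      refine mul_le_mul_of_nonneg_right ?_ hMm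
      nlinarith [mul_le_mul hK1 hK1 zero_le_one hKpos.le, hc₁pos, hd₂, hC]
end

section
/- Let d ≥ 1 and α ∈ (−1,∞)^d. Then there is a constant C (depending only on d and α) such that for all s ∈ (0,1), all x ∈ (0,∞)^d and all y ∈ (0,∞)^d with |y − x| ≥ m(x), K_s^α(x,y) ≤ C e^{|x|²} · min( (|x|θ)^{−d} ∏_{i=1}^d (x_i + |x|θ)^{−2α_i−1} , (|x|+1)^d ∏_{i=1}^d (x_i + 1/(|x|+1))^{−2α_i−1} ), where θ = θ(x,y) and the first expression in the minimum is interpreted as +∞ when |x|θ = 0. -/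
open MeasureTheory

/-- The Euclidean norm of `x ∈ ℝ^d`. -/
noncomputable def enr (d : ℕ) (x : Fin d → ℝ) : ℝ :=
  Real.sqrt (∑ i, x i ^ 2)

/-- The angle `θ(x,y) = arccos(⟨x,y⟩/(|x||y|))` between `x` and `y`. -/
noncomputable def theta (d : ℕ) (x y : Fin d → ℝ) : ℝ :=
  Real.arccos ((∑ i, x i * y i) / (enr d x * enr d y))

/-- The kernel
`K_s^α(x,y) = s^{−d/2} (∏ (x_i + √s)^{−2α_i−1}) exp(|x|² − |(1+s)x − (1−s)y|²/(8s))`. -/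
noncomputable def Kker (d : ℕ) (α : Fin d → ℝ) (s : ℝ) (x y : Fin d → ℝ) : ℝ :=
  s ^ (-(d : ℝ) / 2) * (∏ i, (x i + Real.sqrt s) ^ (-(2 * α i + 1))) *
    Real.exp ((∑ i, x i ^ 2) - (∑ i, ((1 + s) * x i - (1 - s) * y i) ^ 2) / (8 * s))


open Real Finset

private lemma ratio_rpow (a b c β : ℝ) (ha : 0 < a) (hb : 0 < b) (hc : 0 < c) :
    (a + b) ^ β ≤ (a + c) ^ β * (max 1 (b / c)) ^ (max β 0) * (max 1 (c / b)) ^ (max (-β) 0) := by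
  rcases le_or_gt 0 β with hβ | hβ
  · rw [max_eq_left hβ, max_eq_right (by linarith : -β ≤ 0), Real.rpow_zero, mul_one,
      ← Real.mul_rpow (by positivity) (le_max_of_le_left zero_le_one)]
    apply Real.rpow_le_rpow (by positivity) _ hβ
    rcases le_or_gt b c with h | h
    · calc a + b ≤ a + c := by linarith
        _ ≤ (a + c) * max 1 (b / c) := le_mul_of_one_le_right (by positivity) (le_max_left _ _)
    · rw [max_eq_right (by rw [le_div_iff₀ hc]; linarith : (1:ℝ) ≤ b / c), mul_comm,
        div_mul_eq_mul_div, le_div_iff₀ hc]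
      nlinarith
  · rw [max_eq_right hβ.le, max_eq_left (by linarith : (0:ℝ) ≤ -β), Real.rpow_zero, mul_one]
    have hM : (0:ℝ) < max 1 (c / b) := lt_max_of_lt_left one_pos
    have key : (a + c) / max 1 (c / b) ≤ a + b := by
      rw [div_le_iff₀ hM]
      rcases le_or_gt c b with h | h
      · calc a + c ≤ a + b := by linarith
          _ ≤ (a + b) * max 1 (c / b) := le_mul_of_one_le_right (by positivity) (le_max_left _ _)
      · rw [max_eq_right (by rw [le_div_iff₀ hb]; linarith : (1:ℝ) ≤ c / b), mul_comm,
          div_mul_eq_mul_div, le_div_iff₀ hb]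
        nlinarith
    calc (a + b) ^ β ≤ ((a + c) / max 1 (c / b)) ^ β :=
          Real.rpow_le_rpow_of_nonpos (by positivity) key hβ.le
      _ = (a + c) ^ β * (max 1 (c / b)) ^ (-β) := by
          rw [Real.div_rpow (by positivity) hM.le, Real.rpow_neg hM.le, div_eq_mul_inv]

private lemma prod_rpow_const {d : ℕ} (M : ℝ) (hM : 0 < M) (e : Fin d → ℝ) :
    ∏ i, M ^ (e i) = M ^ (∑ i, e i) := by
  simp only [Real.rpow_def_of_pos hM, ← Real.exp_sum, Finset.mul_sum]

private lemma core (d : ℕ) (β : Fin d → ℝ) (hβ : ∀ i, β i ≤ 1)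
    {s t : ℝ} (hs : 0 < s) (ht : 0 < t) (x : Fin d → ℝ) (hx : ∀ i, 0 < x i) :
    s ^ (-(d:ℝ)/2) * ∏ i, (x i + Real.sqrt s) ^ (β i) ≤
      Real.exp (8 * ((d:ℝ) + ∑ i, max (-(β i)) 0) ^ 2) * Real.exp (t^2/(32*s)) *
        (t ^ (-(d:ℝ)) * ∏ i, (x i + t) ^ (β i)) := by
  have hb : 0 < Real.sqrt s := Real.sqrt_pos.mpr hs
  set b := Real.sqrt s with hbdef
  set ρ := t / b with hρdef
  have hρ : 0 < ρ := by positivity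
  set P := ∑ i, max (β i) 0 with hPdef
  set Q := ∑ i, max (-(β i)) 0 with hQdef
  have hP0 : 0 ≤ P := Finset.sum_nonneg fun i _ => le_max_right _ _
  have hQ0 : 0 ≤ Q := Finset.sum_nonneg fun i _ => le_max_right _ _
  have hPd : P ≤ d := by
    calc P ≤ ∑ _i : Fin d, (1:ℝ) := Finset.sum_le_sum fun i _ => max_le (hβ i) zero_le_one
      _ = d := by simp
  -- step 1 : product comparison
  have step1 : ∏ i, (x i + b) ^ (β i) ≤
      (∏ i, (x i + t) ^ (β i)) * (max 1 (b/t)) ^ P * (max 1 (t/b)) ^ Q := by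
    calc ∏ i, (x i + b) ^ (β i)
        ≤ ∏ i, ((x i + t) ^ (β i) * (max 1 (b/t)) ^ (max (β i) 0) *
            (max 1 (t/b)) ^ (max (-(β i)) 0)) := by
          apply Finset.prod_le_prod (fun i _ => Real.rpow_nonneg (by have := hx i; linarith) _)
          exact fun i _ => ratio_rpow (x i) b t (β i) (hx i) hb ht
      _ = (∏ i, (x i + t) ^ (β i)) * (max 1 (b/t)) ^ P * (max 1 (t/b)) ^ Q := by
          rw [Finset.prod_mul_distrib, Finset.prod_mul_distrib,
            prod_rpow_const _ (lt_max_of_lt_left one_pos) _,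
            prod_rpow_const _ (lt_max_of_lt_left one_pos) _]
  -- step 2 : s^{-d/2} = t^{-d} * rho^d
  have step2 : s ^ (-(d:ℝ)/2) = t ^ (-(d:ℝ)) * ρ ^ ((d:ℝ)) := by
    have h1 : t ^ ((d:ℝ)) ≠ 0 := ne_of_gt (Real.rpow_pos_of_pos ht _)
    have h2 : b ^ ((d:ℝ)) ≠ 0 := ne_of_gt (Real.rpow_pos_of_pos hb _)
    have hsb : s ^ (-(d:ℝ)/2) = b ^ (-(d:ℝ)) := by
      have : s = b ^ (2:ℝ) := by rw [Real.rpow_two]; exact (Real.sq_sqrt hs.le).symm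
      rw [this, ← Real.rpow_mul hb.le]
      congr 1; ring
    rw [hsb, hρdef, Real.div_rpow ht.le hb.le, Real.rpow_neg ht.le, Real.rpow_neg hb.le]
    field_simp
  -- step 3
  have hbt : b / t = ρ⁻¹ := by rw [hρdef, inv_div]
  have step3 : ρ ^ ((d:ℝ)) * (max 1 (b/t)) ^ P * (max 1 (t/b)) ^ Q ≤ (1+ρ) ^ ((d:ℝ) + Q) := by
    rw [hbt, ← hρdef]
    rcases le_or_gt ρ 1 with h1 | h1
    · rw [max_eq_right ((one_le_inv₀ hρ).mpr h1), max_eq_left h1, Real.one_rpow, mul_one]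
      calc ρ ^ ((d:ℝ)) * (ρ⁻¹) ^ P = ρ ^ ((d:ℝ) - P) := by
            rw [Real.inv_rpow hρ.le, ← Real.rpow_neg hρ.le, ← Real.rpow_add hρ]; ring_nf
        _ ≤ 1 := Real.rpow_le_one hρ.le h1 (by linarith)
        _ ≤ (1+ρ) ^ ((d:ℝ)+Q) := Real.one_le_rpow (by linarith) (by positivity)
    · rw [max_eq_left (inv_le_one_of_one_le₀ h1.le), max_eq_right h1.le, Real.one_rpow, mul_one]
      calc ρ ^ ((d:ℝ)) * ρ ^ Q = ρ ^ ((d:ℝ)+Q) := (Real.rpow_add hρ _ _).symm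
        _ ≤ (1+ρ) ^ ((d:ℝ)+Q) := Real.rpow_le_rpow hρ.le (by linarith) (by positivity)
  -- step 4
  have step4 : (1+ρ) ^ ((d:ℝ) + Q) ≤ Real.exp (8 * ((d:ℝ) + Q) ^ 2) * Real.exp (t^2/(32*s)) := by
    set N := (d:ℝ) + Q with hN
    have hN0 : 0 ≤ N := by positivity
    have hρ2 : ρ ^ 2 = t ^ 2 / s := by
      rw [hρdef, div_pow, Real.sq_sqrt hs.le]
    have h4 : ρ * N ≤ 8 * N ^ 2 + t ^ 2 / (32 * s) := by
      have e1 : ρ * N ≤ ρ ^ 2 / 32 + 8 * N ^ 2 := by nlinarith [sq_nonneg (ρ - 16 * N)]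
      have e2 : ρ ^ 2 / 32 = t ^ 2 / (32 * s) := by rw [hρ2]; ring
      linarith
    calc (1+ρ) ^ N ≤ (Real.exp ρ) ^ N := by
          apply Real.rpow_le_rpow (by positivity) _ hN0
          have := Real.add_one_le_exp ρ; linarith
      _ = Real.exp (ρ * N) := (Real.exp_mul ρ N).symm
      _ ≤ Real.exp (8 * N ^ 2 + t ^ 2 / (32 * s)) := Real.exp_le_exp.mpr h4
      _ = Real.exp (8 * N ^ 2) * Real.exp (t ^ 2 / (32 * s)) := Real.exp_add _ _
  -- assemble
  have hprodt : (0:ℝ) ≤ t ^ (-(d:ℝ)) * ∏ i, (x i + t) ^ (β i) :=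
    mul_nonneg (Real.rpow_nonneg ht.le _)
      (Finset.prod_nonneg fun i _ => Real.rpow_nonneg (by have := hx i; linarith) _)
  calc s ^ (-(d:ℝ)/2) * ∏ i, (x i + b) ^ (β i)
      = (t ^ (-(d:ℝ)) * ρ ^ ((d:ℝ))) * ∏ i, (x i + b) ^ (β i) := by rw [step2]
    _ ≤ (t ^ (-(d:ℝ)) * ρ ^ ((d:ℝ))) *
        ((∏ i, (x i + t) ^ (β i)) * (max 1 (b/t)) ^ P * (max 1 (t/b)) ^ Q) := by
        apply mul_le_mul_of_nonneg_left step1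
        exact mul_nonneg (Real.rpow_nonneg ht.le _) (Real.rpow_nonneg hρ.le _)
    _ = (ρ ^ ((d:ℝ)) * (max 1 (b/t)) ^ P * (max 1 (t/b)) ^ Q) *
        (t ^ (-(d:ℝ)) * ∏ i, (x i + t) ^ (β i)) := by ring
    _ ≤ ((1+ρ) ^ ((d:ℝ) + Q)) * (t ^ (-(d:ℝ)) * ∏ i, (x i + t) ^ (β i)) :=
        mul_le_mul_of_nonneg_right step3 hprodt
    _ ≤ (Real.exp (8 * ((d:ℝ) + Q) ^ 2) * Real.exp (t^2/(32*s))) *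
        (t ^ (-(d:ℝ)) * ∏ i, (x i + t) ^ (β i)) :=
        mul_le_mul_of_nonneg_right step4 hprodt

private lemma enr_eq_norm (d : ℕ) (z : Fin d → ℝ) :
    enr d z = ‖(WithLp.equiv 2 (Fin d → ℝ)).symm z‖ := by
  simp [enr, EuclideanSpace.norm_eq, Real.norm_eq_abs, sq_abs, WithLp.equiv_symm_apply, PiLp.toLp_apply]

set_option maxHeartbeats 1000000 in
private lemma geomA (d : ℕ) (hd : 1 ≤ d) {s : ℝ} (hs0 : 0 < s)
    (x y : Fin d → ℝ) (hx : ∀ i, 0 < x i) (hy : ∀ i, 0 < y i) :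
    (enr d x * theta d x y) ^ 2 ≤ 4 * ∑ i, ((1 + s) * x i - (1 - s) * y i) ^ 2 := by
  have hne : (Finset.univ : Finset (Fin d)).Nonempty := ⟨⟨0, hd⟩, Finset.mem_univ _⟩
  set A := ∑ i, x i ^ 2 with hAdef
  set B := ∑ i, y i ^ 2 with hBdef
  set I := ∑ i, x i * y i with hIdef
  have hA : 0 < A := Finset.sum_pos (fun i _ => pow_pos (hx i) 2) hne
  have hB : 0 < B := Finset.sum_pos (fun i _ => pow_pos (hy i) 2) hne
  have hI : 0 < I := Finset.sum_pos (fun i _ => mul_pos (hx i) (hy i)) hne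
  have hCS : I ^ 2 ≤ A * B := Finset.sum_mul_sq_le_sq_mul_sq Finset.univ x y
  set c := I / (enr d x * enr d y) with hcdef
  have henrx : enr d x = Real.sqrt A := rfl
  have henry : enr d y = Real.sqrt B := rfl
  have hc0 : 0 ≤ c := by
    rw [hcdef, henrx, henry]; positivity
  have hc1 : c ≤ 1 := by
    rw [hcdef, henrx, henry, div_le_one (by positivity)]
    calc I = Real.sqrt (I ^ 2) := (Real.sqrt_sq hI.le).symm
      _ ≤ Real.sqrt (A * B) := Real.sqrt_le_sqrt hCS
      _ = Real.sqrt A * Real.sqrt B := Real.sqrt_mul hA.le _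
  set θ := theta d x y with hθdef
  have hθ0 : 0 ≤ θ := Real.arccos_nonneg _
  have hθtop : θ ≤ π / 2 := Real.arccos_le_pi_div_two.mpr hc0
  have hcos : Real.cos θ = c := Real.cos_arccos (by linarith) hc1
  have h1c2 : 0 ≤ 1 - c ^ 2 := by nlinarith
  have jordan : 2 / π * θ ≤ Real.sin θ := Real.mul_le_sin hθ0 hθtop
  have hsin2 : Real.sin θ ^ 2 = 1 - c ^ 2 := by rw [Real.sin_sq, hcos]
  have hπ : 0 < π := Real.pi_pos
  have j2 : (2 / π * θ) ^ 2 ≤ 1 - c ^ 2 := by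
    rw [← hsin2]
    exact pow_le_pow_left₀ (by positivity) jordan 2
  have j3 : 4 * θ ^ 2 ≤ π ^ 2 * (1 - c ^ 2) := by
    have hπ2 : (0:ℝ) < π ^ 2 := by positivity
    have e : (2 / π * θ) ^ 2 = 4 * θ ^ 2 / π ^ 2 := by
      rw [mul_pow, div_pow]; ring
    rw [e, div_le_iff₀ hπ2] at j2
    nlinarith [j2]
  -- quadratic form bound
  have hc2 : c ^ 2 = I ^ 2 / (A * B) := by
    rw [hcdef, henrx, henry, div_pow, mul_pow, Real.sq_sqrt hA.le, Real.sq_sqrt hB.le]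
  have hsum : ∑ i, ((1 + s) * x i - (1 - s) * y i) ^ 2 =
      (1 + s) ^ 2 * A - 2 * (1 + s) * (1 - s) * I + (1 - s) ^ 2 * B := by
    have e : ∀ i : Fin d, ((1 + s) * x i - (1 - s) * y i) ^ 2 =
        (1 + s) ^ 2 * (x i ^ 2) - 2 * (1 + s) * (1 - s) * (x i * y i) +
          (1 - s) ^ 2 * (y i ^ 2) := fun i => by ring
    rw [Finset.sum_congr rfl fun i _ => e i, Finset.sum_add_distrib, Finset.sum_sub_distrib,
      ← Finset.mul_sum, ← Finset.mul_sum, ← Finset.mul_sum]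
  clear_value A B I c θ
  have key2 : A * B - I ^ 2 ≤
      ((1 + s) ^ 2 * A - 2 * (1 + s) * (1 - s) * I + (1 - s) ^ 2 * B) * B := by
    have iden : ((1 + s) ^ 2 * A - 2 * (1 + s) * (1 - s) * I + (1 - s) ^ 2 * B) * B -
        (A * B - I ^ 2) = ((1 - s) * B - (1 + s) * I) ^ 2 + (s ^ 2 + 2 * s) * (A * B - I ^ 2) := by
      ring
    have t1 := sq_nonneg ((1 - s) * B - (1 + s) * I)
    have t2 : (0:ℝ) ≤ (s ^ 2 + 2 * s) * (A * B - I ^ 2) :=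
      mul_nonneg (by nlinarith) (sub_nonneg.mpr hCS)
    linarith
  have key : A * (1 - c ^ 2) ≤ ∑ i, ((1 + s) * x i - (1 - s) * y i) ^ 2 := by
    rw [hsum, hc2]
    have e3 : A * (1 - I ^ 2 / (A * B)) = (A * B - I ^ 2) / B := by
      field_simp
    rw [e3, div_le_iff₀ hB]
    exact key2
  have hLHS : (enr d x * θ) ^ 2 = A * θ ^ 2 := by
    rw [henrx, mul_pow, Real.sq_sqrt hA.le]
  rw [hLHS]
  nlinarith [mul_le_mul_of_nonneg_left j3 hA.le, key, Real.pi_le_four,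
    mul_nonneg (by nlinarith [Real.pi_le_four, hπ] : (0:ℝ) ≤ 16 - π ^ 2)
      (mul_nonneg hA.le h1c2)]

private lemma geomB (d : ℕ) {s : ℝ} (hs0 : 0 < s) (hs1 : s < 1)
    (x y : Fin d → ℝ)
    (hm : 1 / (enr d x + 1) ≤ enr d (fun i => y i - x i))
    (hsm : s ≤ (1 / (enr d x + 1)) ^ 2 / 8) :
    (1 / (enr d x + 1)) ^ 2 / 4 ≤ ∑ i, ((1 + s) * x i - (1 - s) * y i) ^ 2 := by
  have hE0 : 0 ≤ enr d x := Real.sqrt_nonneg _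
  set E := enr d x with hEdef
  set m := 1 / (E + 1) with hmdef
  have hm0 : 0 < m := by rw [hmdef]; positivity
  have hm1 : m ≤ 1 := by rw [hmdef, div_le_one (by linarith)]; linarith
  have hmE : m * E ≤ 1 := by
    rw [hmdef]; rw [div_mul_eq_mul_div, one_mul, div_le_one (by linarith)]; linarith
  have hs8 : s ≤ 1 / 8 := le_trans hsm (by nlinarith)
  set u := (WithLp.equiv 2 (Fin d → ℝ)).symm with hu
  set W := u (fun i => (1 + s) * x i - (1 - s) * y i) with hW
  set D := u (fun i => x i - y i) with hD
  set X := u x with hX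
  have hWDX : W = (1 - s) • D + (2 * s) • X := by
    rw [hW, hD, hX]
    ext i
    simp [hu, WithLp.equiv_symm_apply, PiLp.toLp_apply, PiLp.add_apply, PiLp.smul_apply, smul_eq_mul]
    ring
  have hDnorm : m ≤ ‖D‖ := by
    have e : u (fun i => y i - x i) = -D := by
      rw [hD]; ext i
      simp [hu, WithLp.equiv_symm_apply, PiLp.toLp_apply, PiLp.neg_apply]
      try ring
    have := hm
    rw [enr_eq_norm d (fun i => y i - x i), ← hu, e, norm_neg] at this
    exact this
  have hXnorm : ‖X‖ = E := by rw [hX, hEdef, enr_eq_norm d x, hu]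
  have hWlow : m / 2 ≤ ‖W‖ := by
    have h1 : ‖(1 - s) • D‖ = (1 - s) * ‖D‖ := by
      rw [norm_smul, Real.norm_eq_abs, abs_of_nonneg (by linarith)]
    have h2 : ‖(2 * s) • X‖ = 2 * s * ‖X‖ := by
      rw [norm_smul, Real.norm_eq_abs, abs_of_nonneg (by linarith)]
    have h3 : ‖(1 - s) • D‖ ≤ ‖W‖ + ‖(2 * s) • X‖ := by
      calc ‖(1 - s) • D‖ = ‖W - (2 * s) • X‖ := by rw [hWDX]; congr 1; abel
        _ ≤ ‖W‖ + ‖(2 * s) • X‖ := norm_sub_le _ _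
    have h4 : (1 - s) * m ≤ (1 - s) * ‖D‖ :=
      mul_le_mul_of_nonneg_left hDnorm (by linarith)
    have h5 : 2 * s * ‖X‖ ≤ m / 4 := by
      rw [hXnorm]
      calc 2 * s * E ≤ 2 * (m ^ 2 / 8) * E := by
            apply mul_le_mul_of_nonneg_right _ hE0
            linarith
        _ = m * (m * E) / 4 := by ring
        _ ≤ m / 4 := by nlinarith
    nlinarith
  have hsumW : ∑ i, ((1 + s) * x i - (1 - s) * y i) ^ 2 = ‖W‖ ^ 2 := by
    have e1 : enr d (fun i => (1 + s) * x i - (1 - s) * y i) = ‖W‖ := by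
      rw [enr_eq_norm, ← hu, ← hW]
    have e2 : (0:ℝ) ≤ ∑ i, ((1 + s) * x i - (1 - s) * y i) ^ 2 :=
      Finset.sum_nonneg fun i _ => sq_nonneg _
    rw [← e1, enr, Real.sq_sqrt e2]
  rw [hsumW]
  nlinarith [hWlow, hm0]

private lemma ofReal_prod_fin {d : ℕ} (f : Fin d → ℝ) (hf : ∀ i, 0 ≤ f i) :
    ENNReal.ofReal (∏ i, f i) = ∏ i, ENNReal.ofReal (f i) := by
  induction (Finset.univ : Finset (Fin d)) using Finset.cons_induction with
  | empty => simp
  | cons a s ha ih =>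
    rw [Finset.prod_cons, Finset.prod_cons, ENNReal.ofReal_mul (hf a), ih]


/-- For `d ≥ 1`, `α ∈ (−1,∞)^d`, there is `C` such that for all `s ∈ (0,1)`,
`x ∈ (0,∞)^d` and `y ∈ (0,∞)^d` with `|y − x| ≥ m(x) = 1/(|x|+1)`,
`K_s^α(x,y) ≤ C e^{|x|²} min((|x|θ)^{−d} ∏ (x_i + |x|θ)^{−2α_i−1},
(|x|+1)^d ∏ (x_i + 1/(|x|+1))^{−2α_i−1})`, the first term of the minimum being `+∞`
when `|x|θ = 0` (which is realized here via `ℝ≥0∞`-valued powers, since `0^r = ∞` in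
`ℝ≥0∞` for negative real `r`). -/
theorem stmt7 (d : ℕ) (hd : 1 ≤ d) (α : Fin d → ℝ) (hα : ∀ i, -1 < α i) :
    ∃ C : ℝ, 0 < C ∧ ∀ s ∈ Set.Ioo (0 : ℝ) 1, ∀ x y : Fin d → ℝ,
      (∀ i, 0 < x i) → (∀ i, 0 < y i) →
      1 / (enr d x + 1) ≤ enr d (fun i => y i - x i) →
      ENNReal.ofReal (Kker d α s x y) ≤
        ENNReal.ofReal C * ENNReal.ofReal (Real.exp (enr d x ^ 2)) *
          min
            ((ENNReal.ofReal (enr d x * theta d x y)) ^ (-(d : ℝ)) *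
              ∏ i, (ENNReal.ofReal (x i + enr d x * theta d x y)) ^ (-(2 * α i + 1)))
            (ENNReal.ofReal ((enr d x + 1) ^ d *
              ∏ i, (x i + 1 / (enr d x + 1)) ^ (-(2 * α i + 1)))) := by
  have hβ1 : ∀ i, (fun i => -(2 * α i + 1)) i ≤ 1 := fun i => by have := hα i; simp; linarith
  set C : ℝ := Real.exp (8 * ((d:ℝ) + ∑ i, max (-(-(2 * α i + 1))) 0) ^ 2) * Real.exp 1
    with hCdef
  have hC : 0 < C := by rw [hCdef]; positivity
  refine ⟨C, hC, ?_⟩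
  rintro s ⟨hs0, hs1⟩ x y hx hy hm
  have hE0 : 0 ≤ enr d x := Real.sqrt_nonneg _
  have hG : enr d x ^ 2 = ∑ i, x i ^ 2 :=
    Real.sq_sqrt (Finset.sum_nonneg fun i _ => sq_nonneg _)
  have hW2 : (0:ℝ) ≤ ∑ i, ((1 + s) * x i - (1 - s) * y i) ^ 2 :=
    Finset.sum_nonneg fun i _ => sq_nonneg _
  -- the main real-valued estimate
  have main : ∀ t : ℝ, 0 < t →
      t ^ 2 / (32 * s) ≤ (∑ i, ((1 + s) * x i - (1 - s) * y i) ^ 2) / (8 * s) + 1 →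
      Kker d α s x y ≤ C * Real.exp (enr d x ^ 2) *
        (t ^ (-(d:ℝ)) * ∏ i, (x i + t) ^ (-(2 * α i + 1))) := by
    intro t ht hcond
    have hcore := core d (fun i => -(2 * α i + 1)) hβ1 hs0 ht x hx
    have hprodt : (0:ℝ) ≤ t ^ (-(d:ℝ)) * ∏ i, (x i + t) ^ (-(2 * α i + 1)) :=
      mul_nonneg (Real.rpow_nonneg ht.le _)
        (Finset.prod_nonneg fun i _ => Real.rpow_nonneg (by have := hx i; linarith) _)
    have e2 : Real.exp (t ^ 2 / (32 * s)) *
        Real.exp ((∑ i, x i ^ 2) - (∑ i, ((1 + s) * x i - (1 - s) * y i) ^ 2) / (8 * s)) ≤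
        Real.exp 1 * Real.exp (∑ i, x i ^ 2) := by
      rw [← Real.exp_add, ← Real.exp_add]
      apply Real.exp_le_exp.mpr
      linarith
    have hKdef : Kker d α s x y =
        (s ^ (-(d:ℝ)/2) * ∏ i, (x i + Real.sqrt s) ^ (-(2 * α i + 1))) *
        Real.exp ((∑ i, x i ^ 2) - (∑ i, ((1 + s) * x i - (1 - s) * y i) ^ 2) / (8 * s)) := by
      rw [Kker]
    rw [hKdef, hG]
    set Z := Real.exp ((∑ i, x i ^ 2) - (∑ i, ((1 + s) * x i - (1 - s) * y i) ^ 2) / (8 * s))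
      with hZdef
    have hZ0 : 0 < Z := Real.exp_pos _
    calc (s ^ (-(d:ℝ)/2) * ∏ i, (x i + Real.sqrt s) ^ (-(2 * α i + 1))) * Z
        ≤ (Real.exp (8 * ((d:ℝ) + ∑ i, max (-(-(2 * α i + 1))) 0) ^ 2) *
            Real.exp (t ^ 2 / (32 * s)) *
            (t ^ (-(d:ℝ)) * ∏ i, (x i + t) ^ (-(2 * α i + 1)))) * Z := by
          exact mul_le_mul_of_nonneg_right hcore hZ0.le
      _ = (Real.exp (8 * ((d:ℝ) + ∑ i, max (-(-(2 * α i + 1))) 0) ^ 2) *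
            (t ^ (-(d:ℝ)) * ∏ i, (x i + t) ^ (-(2 * α i + 1)))) *
            (Real.exp (t ^ 2 / (32 * s)) * Z) := by ring
      _ ≤ (Real.exp (8 * ((d:ℝ) + ∑ i, max (-(-(2 * α i + 1))) 0) ^ 2) *
            (t ^ (-(d:ℝ)) * ∏ i, (x i + t) ^ (-(2 * α i + 1)))) *
            (Real.exp 1 * Real.exp (∑ i, x i ^ 2)) := by
          apply mul_le_mul_of_nonneg_left _ (by positivity)
          rw [hZdef]; exact e2
      _ = C * Real.exp (∑ i, x i ^ 2) *
            (t ^ (-(d:ℝ)) * ∏ i, (x i + t) ^ (-(2 * α i + 1))) := by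
          rw [hCdef]; ring
  -- split the min
  have hdist : ∀ Z A B : ENNReal, Z * (A ⊓ B) = (Z * A) ⊓ (Z * B) := by
    intro Z A B
    rcases le_total A B with h | h
    · rw [inf_eq_left.mpr h, inf_eq_left.mpr (mul_le_mul_right h Z)]
    · rw [inf_eq_right.mpr h, inf_eq_right.mpr (mul_le_mul_right h Z)]
  rw [hdist, le_inf_iff]
  constructor
  · -- angle bound
    rcases eq_or_lt_of_le (mul_nonneg hE0 (Real.arccos_nonneg _) :
        (0:ℝ) ≤ enr d x * theta d x y) with hT0 | hT
    · -- T = 0 : right side is ⊤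
      have htop : (ENNReal.ofReal (enr d x * theta d x y)) ^ (-(d : ℝ)) = ⊤ := by
        rw [← hT0, ENNReal.ofReal_zero]
        apply ENNReal.zero_rpow_of_neg
        have : (1:ℝ) ≤ (d:ℝ) := by exact_mod_cast hd
        linarith
      have hprodne : (∏ i, (ENNReal.ofReal (x i + enr d x * theta d x y)) ^
          (-(2 * α i + 1))) ≠ 0 := by
        rw [Finset.prod_ne_zero_iff]
        intro i _
        have h1 : 0 < ENNReal.ofReal (x i + enr d x * theta d x y) := by
          rw [ENNReal.ofReal_pos, ← hT0]
          simpa using hx i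
        exact (ENNReal.rpow_pos h1 ENNReal.ofReal_ne_top).ne'
      have : ENNReal.ofReal C * ENNReal.ofReal (Real.exp (enr d x ^ 2)) *
          ((ENNReal.ofReal (enr d x * theta d x y)) ^ (-(d : ℝ)) *
            ∏ i, (ENNReal.ofReal (x i + enr d x * theta d x y)) ^ (-(2 * α i + 1))) = ⊤ := by
        rw [htop, ENNReal.top_mul hprodne, ENNReal.mul_top]
        apply mul_ne_zero
        · simpa [ENNReal.ofReal_pos] using hC
        · simpa [ENNReal.ofReal_pos] using Real.exp_pos (enr d x ^ 2)
      rw [this]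
      exact le_top
    · -- T > 0
      have hcond : (enr d x * theta d x y) ^ 2 / (32 * s) ≤
          (∑ i, ((1 + s) * x i - (1 - s) * y i) ^ 2) / (8 * s) + 1 := by
        have h4 := geomA d hd hs0 x y hx hy
        calc (enr d x * theta d x y) ^ 2 / (32 * s)
            ≤ (4 * ∑ i, ((1 + s) * x i - (1 - s) * y i) ^ 2) / (32 * s) := by gcongr
          _ = (∑ i, ((1 + s) * x i - (1 - s) * y i) ^ 2) / (8 * s) := by ring
          _ ≤ _ := by linarith
      have hreal := main _ hT hcond
      have hRHS : (ENNReal.ofReal (enr d x * theta d x y)) ^ (-(d : ℝ)) *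
          ∏ i, (ENNReal.ofReal (x i + enr d x * theta d x y)) ^ (-(2 * α i + 1)) =
          ENNReal.ofReal ((enr d x * theta d x y) ^ (-(d:ℝ)) *
            ∏ i, (x i + enr d x * theta d x y) ^ (-(2 * α i + 1))) := by
        rw [ENNReal.ofReal_rpow_of_pos hT,
          ENNReal.ofReal_mul (Real.rpow_nonneg (by linarith) _),
          ofReal_prod_fin _ (fun i => Real.rpow_nonneg (by have := hx i; linarith) _)]
        congr 1
        exact Finset.prod_congr rfl fun i _ =>
          ENNReal.ofReal_rpow_of_pos (by have := hx i; linarith)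
      rw [hRHS, ← ENNReal.ofReal_mul hC.le, ← ENNReal.ofReal_mul (by positivity)]
      exact ENNReal.ofReal_le_ofReal hreal
  · -- global bound
    have hm0 : 0 < 1 / (enr d x + 1) := by positivity
    have hcond : (1 / (enr d x + 1)) ^ 2 / (32 * s) ≤
        (∑ i, ((1 + s) * x i - (1 - s) * y i) ^ 2) / (8 * s) + 1 := by
      by_cases hcase : s ≤ (1 / (enr d x + 1)) ^ 2 / 8
      · have h4 := geomB d hs0 hs1 x y hm hcase
        calc (1 / (enr d x + 1)) ^ 2 / (32 * s)
            = ((1 / (enr d x + 1)) ^ 2 / 4) / (8 * s) := by ring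
          _ ≤ (∑ i, ((1 + s) * x i - (1 - s) * y i) ^ 2) / (8 * s) := by gcongr
          _ ≤ _ := by linarith
      · push_neg at hcase
        have h5 : (1 / (enr d x + 1)) ^ 2 ≤ 8 * s := by linarith
        have h6 : (0:ℝ) ≤ (∑ i, ((1 + s) * x i - (1 - s) * y i) ^ 2) / (8 * s) := by positivity
        calc (1 / (enr d x + 1)) ^ 2 / (32 * s) ≤ (8 * s) / (32 * s) := by gcongr
          _ = 1 / 4 := by rw [div_eq_iff (by positivity : (32:ℝ) * s ≠ 0)]; ring
          _ ≤ _ := by linarith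
    have hreal := main _ hm0 hcond
    have hmd : (1 / (enr d x + 1)) ^ (-(d:ℝ)) = (enr d x + 1) ^ d := by
      rw [one_div, Real.inv_rpow (by linarith), Real.rpow_neg (by linarith), inv_inv,
        Real.rpow_natCast]
    rw [hmd] at hreal
    calc ENNReal.ofReal (Kker d α s x y)
        ≤ ENNReal.ofReal (C * Real.exp (enr d x ^ 2) *
            ((enr d x + 1) ^ d * ∏ i, (x i + 1 / (enr d x + 1)) ^ (-(2 * α i + 1)))) :=
          ENNReal.ofReal_le_ofReal hreal
      _ = ENNReal.ofReal C * ENNReal.ofReal (Real.exp (enr d x ^ 2)) *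
          ENNReal.ofReal ((enr d x + 1) ^ d *
            ∏ i, (x i + 1 / (enr d x + 1)) ^ (-(2 * α i + 1))) := by
          rw [← ENNReal.ofReal_mul hC.le, ← ENNReal.ofReal_mul (by positivity)]
end
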